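/- arXiv:1501.04816 — 4 statements merged into one kernel-verified Lean document; each statement's English description precedes it below -/
import Mathlib

section
/- For every integer k ≥ 2 and every ε > 0 there exists a constant b = b(k, ε) > 0 such that the following holds. For every ε' > 0 there is n₀ such that for all n ≥ n₀, the proportion of k-uniform hypergraphs on the vertex set {1, …, kn} with exactly ⌈bn⌉ edges that contain a matching with at least (1 − ε)n edges is at least 1 − ε'. -/
open Finset

/-- The collection of all `k`-uniform hypergraphs on `Fin N` with exactly `m` edges. -/
def hypergraphSpace (N k m : ℕ) : Finset (Finset (Finset (Fin N))) :=
  Finset.powersetCard m (Finset.powersetCard k (univ : Finset (Fin N)))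

lemma choose_mul_pow_le (T A m : ℕ) :
    (T - A).choose m * T ^ m ≤ T.choose m * (T - A) ^ m := by
  induction m with
  | zero => simp
  | succ m ih =>
    set B := T - A with hB
    have hBT : B ≤ T := Nat.sub_le _ _
    by_cases hmB : B ≤ m
    · have h0 : B.choose (m+1) = 0 := Nat.choose_eq_zero_of_lt (Nat.lt_succ_of_le hmB)
      simp [h0]
    push_neg at hmB
    have hmT : m < T := lt_of_lt_of_le hmB hBT
    have key : (B - m) * T ≤ (T - m) * B := by
      have h1 : m ≤ B := le_of_lt hmB
      have h2 : m ≤ T := le_of_lt hmT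
      zify [h1, h2]
      nlinarith [(Nat.cast_le (α := ℤ)).2 hBT, (Nat.cast_le (α := ℤ)).2 h1]
    have main : B.choose (m+1) * T ^ (m+1) * (m+1) ≤ T.choose (m+1) * B ^ (m+1) * (m+1) := by
      calc B.choose (m+1) * T ^ (m+1) * (m+1)
          = B.choose (m+1) * (m+1) * T ^ (m+1) := by ring
        _ = B.choose m * (B - m) * T ^ (m+1) := by rw [Nat.choose_succ_right_eq]
        _ = (B.choose m * T ^ m) * ((B - m) * T) := by ring
        _ ≤ (T.choose m * B ^ m) * ((T - m) * B) := Nat.mul_le_mul ih key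
        _ = T.choose m * (T - m) * B ^ (m+1) := by ring
        _ = T.choose (m+1) * (m+1) * B ^ (m+1) := by rw [Nat.choose_succ_right_eq]
        _ = T.choose (m+1) * B ^ (m+1) * (m+1) := by ring
    exact Nat.le_of_mul_le_mul_right main (Nat.succ_pos m)

lemma choose_le_two_pow' (n r : ℕ) : n.choose r ≤ 2 ^ n := by
  by_cases h : r ≤ n
  · rw [← Nat.sum_range_choose n]
    exact Finset.single_le_sum (f := fun i => n.choose i) (fun i _ => Nat.zero_le _)
      (Finset.mem_range.2 (Nat.lt_succ_of_le h))
  · push_neg at h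
    rw [Nat.choose_eq_zero_of_lt h]
    exact Nat.zero_le _

open scoped Classical in
lemma exists_maximal_matching {N : ℕ} (R : Finset (Finset (Fin N)))
    (hne : ∀ e ∈ R, e ≠ ∅) :
    ∃ M ⊆ R, (∀ e₁ ∈ M, ∀ e₂ ∈ M, e₁ ≠ e₂ → Disjoint e₁ e₂) ∧
      ∀ e ∈ R, ¬ Disjoint e (M.sup id) := by
  classical
  set S := R.powerset.filter
    (fun M => ∀ e₁ ∈ M, ∀ e₂ ∈ M, e₁ ≠ e₂ → Disjoint e₁ e₂) with hS
  have hSne : S.Nonempty := ⟨∅, by simp [hS]⟩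
  obtain ⟨M, hMS, hmax⟩ := S.exists_max_image Finset.card hSne
  rw [hS, mem_filter, mem_powerset] at hMS
  obtain ⟨hMR, hmatch⟩ := hMS
  refine ⟨M, hMR, hmatch, ?_⟩
  intro e he hdis
  have heM : e ∉ M := by
    intro heM
    exact hne e he (disjoint_self.mp (hdis.mono_right (Finset.le_sup (f := id) heM)))
  have hins : insert e M ∈ S := by
    rw [hS, mem_filter, mem_powerset]
    refine ⟨insert_subset he hMR, ?_⟩
    have hd : ∀ f ∈ M, Disjoint e f := fun f hf =>
      hdis.mono_right (Finset.le_sup (f := id) hf)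
    intro e₁ h₁ e₂ h₂ hne12
    rcases mem_insert.mp h₁ with rfl | h₁' <;> rcases mem_insert.mp h₂ with rfl | h₂'
    · exact absurd rfl hne12
    · exact hd _ h₂'
    · exact (hd _ h₁').symm
    · exact hmatch _ h₁' _ h₂' hne12
  have := hmax _ hins
  rw [card_insert_of_notMem heM] at this
  omega

open scoped Classical in
lemma bad_card_le (N k m s : ℕ) (hk : 0 < k) (hs : k * s ≤ N) :
    ((hypergraphSpace N k m).filter fun R =>
        ¬ ∃ M ⊆ R, (∀ e₁ ∈ M, ∀ e₂ ∈ M, e₁ ≠ e₂ → Disjoint e₁ e₂) ∧ s < M.card).card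
      ≤ N.choose (k * s) * (N.choose k - (N - k * s).choose k).choose m := by
  classical
  set w := k * s with hw
  set E : Finset (Fin N) → Finset (Finset (Fin N)) :=
    fun W => (powersetCard k (univ : Finset (Fin N))).filter fun e => ¬ Disjoint e W with hE
  have hsub : ((hypergraphSpace N k m).filter fun R =>
        ¬ ∃ M ⊆ R, (∀ e₁ ∈ M, ∀ e₂ ∈ M, e₁ ≠ e₂ → Disjoint e₁ e₂) ∧ s < M.card) ⊆
      (powersetCard w (univ : Finset (Fin N))).biUnion (fun W => powersetCard m (E W)) := by
    intro R hR
    rw [mem_filter] at hR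
    obtain ⟨hRmem, hbad⟩ := hR
    rw [hypergraphSpace, mem_powersetCard] at hRmem
    obtain ⟨hRsub, hRcard⟩ := hRmem
    have hcard : ∀ e ∈ R, e.card = k := fun e he => (mem_powersetCard.mp (hRsub he)).2
    have hne : ∀ e ∈ R, e ≠ ∅ := by
      intro e he h0
      exact hk.ne' (by rw [← hcard e he, h0, card_empty])
    obtain ⟨M, hMR, hmatch, hcov⟩ := exists_maximal_matching R hne
    have hMs : M.card ≤ s := by
      by_contra h
      push_neg at h
      exact hbad ⟨M, hMR, hmatch, h⟩
    have hVcard : (M.sup id).card = M.card * k := by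
      rw [Finset.sup_eq_biUnion, Finset.card_biUnion (t := id) hmatch]
      simp only [id_eq]
      rw [Finset.sum_congr rfl (fun e he => hcard e (hMR he)), Finset.sum_const, smul_eq_mul]
    have hVle : (M.sup id).card ≤ w := by
      rw [hVcard, hw, mul_comm k s]
      exact Nat.mul_le_mul_right k hMs
    obtain ⟨W, hVW, _, hWcard⟩ := exists_subsuperset_card_eq
      (subset_univ (M.sup id)) hVle (by rw [card_univ, Fintype.card_fin]; exact hs)
    rw [mem_biUnion]
    refine ⟨W, mem_powersetCard.mpr ⟨subset_univ W, hWcard⟩,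
      mem_powersetCard.mpr ⟨?_, hRcard⟩⟩
    intro e he
    rw [hE, mem_filter]
    exact ⟨hRsub he, fun hdis => hcov e he (hdis.mono_right hVW)⟩
  have hEcard : ∀ W ∈ powersetCard w (univ : Finset (Fin N)),
      (E W).card = N.choose k - (N - w).choose k := by
    intro W hW
    rw [mem_powersetCard] at hW
    have heq : E W = powersetCard k (univ : Finset (Fin N)) \ powersetCard k (univ \ W) := by
      ext e
      simp only [hE, mem_filter, mem_sdiff, mem_powersetCard, subset_sdiff]
      tauto
    rw [heq, card_sdiff_of_subset (powersetCard_mono sdiff_subset), card_powersetCard,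
      card_powersetCard, card_sdiff_of_subset (subset_univ W), card_univ, Fintype.card_fin, hW.2]
  calc ((hypergraphSpace N k m).filter fun R =>
        ¬ ∃ M ⊆ R, (∀ e₁ ∈ M, ∀ e₂ ∈ M, e₁ ≠ e₂ → Disjoint e₁ e₂) ∧ s < M.card).card
      ≤ ((powersetCard w (univ : Finset (Fin N))).biUnion fun W => powersetCard m (E W)).card :=
        card_le_card hsub
    _ ≤ ∑ W ∈ powersetCard w (univ : Finset (Fin N)), (powersetCard m (E W)).card :=
        card_biUnion_le
    _ = ∑ _W ∈ powersetCard w (univ : Finset (Fin N)),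
          (N.choose k - (N - w).choose k).choose m := by
        refine sum_congr rfl fun W hW => ?_
        rw [card_powersetCard, hEcard W hW]
    _ = (powersetCard w (univ : Finset (Fin N))).card *
          (N.choose k - (N - w).choose k).choose m := by
        rw [sum_const, smul_eq_mul]
    _ = N.choose w * (N.choose k - (N - w).choose k).choose m := by
        rw [card_powersetCard, card_univ, Fintype.card_fin]

set_option maxHeartbeats 2000000 in
open scoped Classical in
/-- For every `k ≥ 2` and `ε > 0` there is `b > 0` such that: for every `ε' > 0` there is `n₀`
such that for all `n ≥ n₀`, the proportion of `k`-uniform hypergraphs on `{1, …, kn}` with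
exactly `⌈bn⌉` edges containing a matching with at least `(1-ε)n` edges is at least
`1 - ε'`. -/
theorem random_hypergraph_large_matching (k : ℕ) (hk : 2 ≤ k) (ε : ℝ) (hε : 0 < ε) :
    ∃ b : ℝ, 0 < b ∧ ∀ ε' : ℝ, 0 < ε' → ∃ n₀ : ℕ, ∀ n : ℕ, n₀ ≤ n →
      (1 - ε') * ((hypergraphSpace (k * n) k ⌈b * (n : ℝ)⌉₊).card : ℝ) ≤
        (((hypergraphSpace (k * n) k ⌈b * (n : ℝ)⌉₊).filter fun R =>
            ∃ M ⊆ R, (∀ e₁ ∈ M, ∀ e₂ ∈ M, e₁ ≠ e₂ → Disjoint e₁ e₂) ∧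
              (1 - ε) * (n : ℝ) ≤ (M.card : ℝ)).card : ℝ) := by
  classical
  set δ : ℝ := min ε (1/2) with hδdef
  have hδ0 : 0 < δ := lt_min hε (by norm_num)
  have hδε : δ ≤ ε := min_le_left _ _
  have hδ1 : δ ≤ 1/2 := min_le_right _ _
  set c : ℝ := (δ/2)^k with hcdef
  have hc0 : 0 < c := pow_pos (by linarith) k
  have hc1 : c ≤ 1 := pow_le_one₀ (by linarith) (by linarith)
  set b : ℝ := (k+1)/c with hbdef
  have hb0 : 0 < b := by positivity
  refine ⟨b, hb0, ?_⟩
  intro ε' hε'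
  refine ⟨max (max 1 ⌈2/δ⌉₊) ⌈1/ε'⌉₊, fun n hn => ?_⟩
  have hn1 : 1 ≤ n := le_trans (le_trans (le_max_left _ _) (le_max_left _ _)) hn
  have hn2 : 2/δ ≤ (n:ℝ) := le_trans (Nat.le_ceil _)
    (Nat.cast_le.2 (le_trans (le_trans (le_max_right _ _) (le_max_left _ _)) hn))
  have hn3 : 1/ε' ≤ (n:ℝ) := le_trans (Nat.le_ceil _)
    (Nat.cast_le.2 (le_trans (le_max_right _ _) hn))
  have hn0R : (0:ℝ) ≤ (n:ℝ) := Nat.cast_nonneg n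
  have hk0R : (0:ℝ) ≤ (k:ℝ) := Nat.cast_nonneg k
  set m := ⌈b * (n:ℝ)⌉₊ with hm
  set N := k * n with hN
  set s := ⌊(1-δ) * (n:ℝ)⌋₊ with hs
  have h1δ : (0:ℝ) ≤ 1 - δ := by linarith
  have hsle : (s:ℝ) ≤ (1-δ)*(n:ℝ) := Nat.floor_le (by positivity)
  have hsn : s ≤ n := by
    have h : (s:ℝ) ≤ (n:ℝ) := le_trans hsle (by nlinarith)
    exact_mod_cast h
  have hws : k*s ≤ N := Nat.mul_le_mul_left k hsn
  set T := N.choose k with hT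
  set A := (N - k*s).choose k with hA
  have hkN : k ≤ N := Nat.le_mul_of_pos_right k (by omega)
  have hT0 : 0 < T := Nat.choose_pos hkN
  have hAT : A ≤ T := Nat.choose_le_choose k (Nat.sub_le _ _)
  set X := hypergraphSpace N k m with hX
  have hXcard : X.card = T.choose m := by
    rw [hX, hypergraphSpace, card_powersetCard, card_powersetCard, card_univ, Fintype.card_fin]
  have hNr : (N:ℝ) = (k:ℝ)*(n:ℝ) := by rw [hN]; push_cast; ring
  -- lower bound on A
  have hδn2 : 2 ≤ δ*(n:ℝ) := by
    have h := (div_le_iff₀ hδ0).mp hn2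
    linarith
  have hcastu : ((N - k*s : ℕ):ℝ) = (N:ℝ) - (k:ℝ)*(s:ℝ) := by
    rw [Nat.cast_sub hws]
    push_cast
    ring
  have hureal : (k:ℝ)*(δ*(n:ℝ)) ≤ ((N - k*s : ℕ):ℝ) := by
    rw [hcastu, hNr]
    nlinarith [hsle]
  have huk : k ≤ N - k*s := by
    have h : (k:ℝ) ≤ ((N - k*s : ℕ):ℝ) := le_trans (by nlinarith) hureal
    exact_mod_cast h
  have hcastu1 : ((N - k*s + 1 - k : ℕ):ℝ) = ((N - k*s : ℕ):ℝ) + 1 - (k:ℝ) := by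
    have h : k ≤ N - k*s + 1 := le_trans huk (Nat.le_succ _)
    rw [Nat.cast_sub h]
    push_cast
    ring
  have hmain : (δ/2)*(N:ℝ) ≤ ((N - k*s + 1 - k : ℕ):ℝ) := by
    rw [hcastu1, hNr]
    nlinarith [hureal, mul_le_mul_of_nonneg_left hδn2 hk0R]
  have hTub : (T:ℝ) ≤ (N:ℝ)^k / (k.factorial : ℝ) := Nat.choose_le_pow_div k N
  have hAlb := Nat.pow_le_choose (α := ℝ) k (N - k*s)
  push_cast at hAlb
  have hcT : c*(T:ℝ) ≤ (A:ℝ) := by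
    have h3 : ((δ/2)*(N:ℝ))^k ≤ ((N - k*s + 1 - k : ℕ):ℝ)^k :=
      pow_le_pow_left₀ (by positivity) hmain k
    have hfac : (0:ℝ) < (k.factorial : ℝ) := by positivity
    calc c*(T:ℝ) ≤ c*((N:ℝ)^k / (k.factorial:ℝ)) := mul_le_mul_of_nonneg_left hTub hc0.le
      _ = ((δ/2)*(N:ℝ))^k / (k.factorial:ℝ) := by rw [hcdef, mul_pow]; ring
      _ ≤ ((N - k*s + 1 - k : ℕ):ℝ)^k / (k.factorial:ℝ) := by gcongr
      _ ≤ (A:ℝ) := hAlb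
  -- ratio bound
  have hratio : (((T - A).choose m : ℕ):ℝ) ≤ ((T.choose m : ℕ):ℝ) * (1 - c)^m := by
    have hcast : (((T-A).choose m : ℕ):ℝ) * (T:ℝ)^m ≤ ((T.choose m : ℕ):ℝ) * ((T-A:ℕ):ℝ)^m := by
      exact_mod_cast choose_mul_pow_le T A m
    have hTA : ((T-A:ℕ):ℝ) = (T:ℝ) - (A:ℝ) := by rw [Nat.cast_sub hAT]
    have hρ : ((T-A:ℕ):ℝ) ≤ (1-c)*(T:ℝ) := by rw [hTA]; nlinarith [hcT]
    have hpow : ((T-A:ℕ):ℝ)^m ≤ ((1-c)*(T:ℝ))^m := pow_le_pow_left₀ (Nat.cast_nonneg _) hρ m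
    have hTpos : (0:ℝ) < (T:ℝ)^m := pow_pos (by exact_mod_cast hT0) m
    have h2 : (((T-A).choose m : ℕ):ℝ) * (T:ℝ)^m ≤
        (((T.choose m : ℕ):ℝ) * (1-c)^m) * (T:ℝ)^m := by
      calc (((T-A).choose m : ℕ):ℝ) * (T:ℝ)^m
          ≤ ((T.choose m : ℕ):ℝ) * (((1-c)*(T:ℝ))^m) :=
            le_trans hcast (mul_le_mul_of_nonneg_left hpow (Nat.cast_nonneg _))
        _ = (((T.choose m : ℕ):ℝ) * (1-c)^m) * (T:ℝ)^m := by rw [mul_pow]; ring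
    exact le_of_mul_le_mul_right h2 hTpos
  -- exponential bounds
  have h1c0 : (0:ℝ) ≤ 1 - c := by linarith
  have hchoose2 : ((N.choose (k*s)):ℝ) ≤ 2^N := by exact_mod_cast choose_le_two_pow' N (k*s)
  have h2exp : (2:ℝ)^N ≤ Real.exp N := by
    calc (2:ℝ)^N ≤ (Real.exp 1)^N :=
        pow_le_pow_left₀ (by norm_num) (by nlinarith [Real.add_one_le_exp (1:ℝ)]) N
      _ = Real.exp N := by rw [← Real.exp_nat_mul, mul_one]
  have h1cexp : (1-c)^m ≤ Real.exp (-(c*m)) := by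
    have h1 : (1-c) ≤ Real.exp (-c) := by nlinarith [Real.add_one_le_exp (-c)]
    calc (1-c)^m ≤ (Real.exp (-c))^m := pow_le_pow_left₀ h1c0 h1 m
      _ = Real.exp ((m:ℝ)*(-c)) := (Real.exp_nat_mul _ m).symm
      _ = Real.exp (-(c*(m:ℝ))) := by ring_nf
  have hcm : (k:ℝ)*(n:ℝ) + (n:ℝ) ≤ c*(m:ℝ) := by
    have hm1 : b*(n:ℝ) ≤ (m:ℝ) := Nat.le_ceil _
    have hcb : c*b = (k:ℝ)+1 := by rw [hbdef]; field_simp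
    have h' : ((k:ℝ)+1)*(n:ℝ) ≤ c*(m:ℝ) := by
      calc ((k:ℝ)+1)*(n:ℝ) = c*b*(n:ℝ) := by rw [hcb]
        _ = c*(b*(n:ℝ)) := by ring
        _ ≤ c*(m:ℝ) := mul_le_mul_of_nonneg_left hm1 hc0.le
    linarith
  have hexp : Real.exp N * Real.exp (-(c*(m:ℝ))) ≤ ε' := by
    rw [← Real.exp_add]
    have hle : (N:ℝ) + (-(c*(m:ℝ))) ≤ -(n:ℝ) := by rw [hNr]; linarith
    have hen : 1/ε' ≤ Real.exp (n:ℝ) :=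
      le_trans hn3 (by nlinarith [Real.add_one_le_exp ((n:ℝ))])
    calc Real.exp ((N:ℝ) + (-(c*(m:ℝ)))) ≤ Real.exp (-(n:ℝ)) := Real.exp_le_exp.mpr hle
      _ ≤ ε' := by
        rw [Real.exp_neg]
        exact (inv_le_comm₀ (Real.exp_pos _) hε').mpr (by rw [← one_div]; exact hen)
  -- the bad set
  have hbad := bad_card_le N k m s (by omega) hws
  have hbadR : ((X.filter fun R => ¬ ∃ M ⊆ R,
        (∀ e₁ ∈ M, ∀ e₂ ∈ M, e₁ ≠ e₂ → Disjoint e₁ e₂) ∧ s < M.card).card : ℝ)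
      ≤ ε' * (X.card:ℝ) := by
    calc ((X.filter fun R => ¬ ∃ M ⊆ R,
          (∀ e₁ ∈ M, ∀ e₂ ∈ M, e₁ ≠ e₂ → Disjoint e₁ e₂) ∧ s < M.card).card : ℝ)
        ≤ ((N.choose (k*s)):ℝ) * (((T - A).choose m : ℕ):ℝ) := by exact_mod_cast hbad
      _ ≤ 2^N * (((T.choose m : ℕ):ℝ) * (1-c)^m) :=
          mul_le_mul hchoose2 hratio (Nat.cast_nonneg _) (by positivity)
      _ = (2^N * (1-c)^m) * ((T.choose m : ℕ):ℝ) := by ring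
      _ ≤ (Real.exp N * Real.exp (-(c*(m:ℝ)))) * ((T.choose m : ℕ):ℝ) := by
          apply mul_le_mul_of_nonneg_right _ (Nat.cast_nonneg _)
          exact mul_le_mul h2exp h1cexp (by positivity) (Real.exp_nonneg _)
      _ ≤ ε' * ((T.choose m : ℕ):ℝ) := mul_le_mul_of_nonneg_right hexp (Nat.cast_nonneg _)
      _ = ε' * (X.card:ℝ) := by rw [hXcard]
  -- conclude
  have hQP : (X.filter fun R => ∃ M ⊆ R,
        (∀ e₁ ∈ M, ∀ e₂ ∈ M, e₁ ≠ e₂ → Disjoint e₁ e₂) ∧ s < M.card) ⊆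
      (X.filter fun R => ∃ M ⊆ R,
        (∀ e₁ ∈ M, ∀ e₂ ∈ M, e₁ ≠ e₂ → Disjoint e₁ e₂) ∧ (1-ε)*(n:ℝ) ≤ (M.card:ℝ)) := by
    intro R hR
    rw [mem_filter] at hR ⊢
    obtain ⟨hRX, M, hMR, hmat, hMc⟩ := hR
    refine ⟨hRX, M, hMR, hmat, ?_⟩
    have h1 : (1-δ)*(n:ℝ) < (s:ℝ)+1 := Nat.lt_floor_add_one _
    have h2 : (s:ℝ)+1 ≤ (M.card:ℝ) := by exact_mod_cast Nat.succ_le_of_lt hMc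
    nlinarith
  have hsplit := Finset.card_filter_add_card_filter_not
    (s := X) (p := fun R => ∃ M ⊆ R,
      (∀ e₁ ∈ M, ∀ e₂ ∈ M, e₁ ≠ e₂ → Disjoint e₁ e₂) ∧ s < M.card)
  have hsplitR : ((X.filter fun R => ∃ M ⊆ R,
        (∀ e₁ ∈ M, ∀ e₂ ∈ M, e₁ ≠ e₂ → Disjoint e₁ e₂) ∧ s < M.card).card : ℝ)
      + ((X.filter fun R => ¬ ∃ M ⊆ R,
        (∀ e₁ ∈ M, ∀ e₂ ∈ M, e₁ ≠ e₂ → Disjoint e₁ e₂) ∧ s < M.card).card : ℝ)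
      = (X.card : ℝ) := by exact_mod_cast hsplit
  have hPQ : ((X.filter fun R => ∃ M ⊆ R,
        (∀ e₁ ∈ M, ∀ e₂ ∈ M, e₁ ≠ e₂ → Disjoint e₁ e₂) ∧ s < M.card).card : ℝ)
      ≤ ((X.filter fun R => ∃ M ⊆ R,
        (∀ e₁ ∈ M, ∀ e₂ ∈ M, e₁ ≠ e₂ → Disjoint e₁ e₂) ∧
          (1-ε)*(n:ℝ) ≤ (M.card:ℝ)).card : ℝ) := by
    exact_mod_cast card_le_card hQP
  linarith
end

section
/- For every α > 0 there exists ξ = ξ(α) > 0 such that the following holds. For every ε > 0 there is n₀ such that for all n ≥ n₀ and every bipartite graph G with parts A and B of equal size n and minimum degree at least αn, the proportion of perfect matchings M̄ between A and B (i.e., bijections from A to B, viewed as sets of n pairwise disjoint edges) with the property that for every sub-matching M ⊆ M̄ with at least (1 − ξ)n edges the graph G ∪ M contains a perfect matching, is at least 1 − ε. -/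
open Finset

/-- `(a)_L * n^L ≤ a^L * (n)_L` when `a ≤ n`. -/
lemma bprm_descFactorial_ratio (a n : ℕ) (h : a ≤ n) :
    ∀ L : ℕ, a.descFactorial L * n ^ L ≤ a ^ L * n.descFactorial L := by
  intro L
  induction L with
  | zero => simp
  | succ L ih =>
    rw [Nat.descFactorial_succ, Nat.descFactorial_succ, pow_succ, pow_succ]
    have key : (a - L) * n ≤ a * (n - L) := by
      rcases le_total a L with hc | hc
      · simp [Nat.sub_eq_zero_of_le hc]
      · have h1 : a * L ≤ L * n := by
          rw [mul_comm]
          exact Nat.mul_le_mul_left L h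
        rw [Nat.sub_mul, Nat.mul_sub]
        exact Nat.sub_le_sub_left h1 _
    calc (a - L) * a.descFactorial L * (n ^ L * n)
        = ((a - L) * n) * (a.descFactorial L * n ^ L) := by ring
      _ ≤ (a * (n - L)) * (a ^ L * n.descFactorial L) := Nat.mul_le_mul key ih
      _ = a ^ L * a * ((n - L) * n.descFactorial L) := by ring

/-- `K^K ≤ e^K * K!`. -/
lemma bprm_pow_le_exp_mul_factorial : ∀ K : ℕ, (K : ℝ) ^ K ≤ Real.exp K * K.factorial := by
  intro K
  induction K with
  | zero => simp
  | succ K ih =>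
    rcases Nat.eq_zero_or_pos K with hK | hK
    · subst hK
      have := Real.add_one_le_exp (1:ℝ)
      have h1 : (0:ℝ) < Real.exp 1 := Real.exp_pos 1
      norm_num
    · have hKpos : (0:ℝ) < K := by exact_mod_cast hK
      have h1 : ((K:ℝ) + 1) ^ K ≤ Real.exp 1 * (K:ℝ) ^ K := by
        have : ((K:ℝ) + 1) ^ K = ((1 + 1/(K:ℝ)) * K) ^ K := by
          field_simp
        rw [this, mul_pow]
        have h2 : (1 + 1/(K:ℝ)) ^ K ≤ Real.exp 1 := by
          have h3 : (1 + 1/(K:ℝ)) ≤ Real.exp (1/(K:ℝ)) := by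
            have := Real.add_one_le_exp (1/(K:ℝ))
            linarith
          calc (1 + 1/(K:ℝ)) ^ K ≤ Real.exp (1/(K:ℝ)) ^ K := by
                apply pow_le_pow_left₀ (by positivity) h3
            _ = Real.exp (K * (1/(K:ℝ))) := (Real.exp_nat_mul _ K).symm
            _ = Real.exp 1 := by rw [mul_one_div, div_self (ne_of_gt hKpos)]
        exact mul_le_mul_of_nonneg_right h2 (by positivity)
      have hstep : ((K:ℝ) + 1) ^ (K + 1) ≤ ((K:ℝ)+1) * (Real.exp 1 * (K:ℝ)^K) := by
        rw [pow_succ, mul_comm (((K:ℝ)+1)^K) ((K:ℝ)+1)]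
        exact mul_le_mul_of_nonneg_left h1 (by positivity)
      have : ((K:ℝ)+1) * (Real.exp 1 * (K:ℝ)^K) ≤ ((K:ℝ)+1) * (Real.exp 1 * (Real.exp K * K.factorial)) := by
        apply mul_le_mul_of_nonneg_left _ (by positivity)
        exact mul_le_mul_of_nonneg_left ih (le_of_lt (Real.exp_pos 1))
      have hfin : ((K:ℝ)+1) * (Real.exp 1 * (Real.exp K * K.factorial)) = Real.exp (K+1) * (K+1).factorial := by
        rw [Real.exp_add, Nat.factorial_succ]
        push_cast
        ring
      push_cast
      push_cast at hstep this hfin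
      linarith


/-- The number of permutations mapping all of `X` outside `Y` is at most
`(n - #Y)_{#X} * (n - #X)!`. -/
lemma bprm_count_perm {n : ℕ} (X Y : Finset (Fin n)) :
    #(univ.filter fun σ : Equiv.Perm (Fin n) => ∀ i ∈ X, σ i ∉ Y) ≤
      (n - #Y).descFactorial #X * (n - #X).factorial := by
  classical
  set F := univ.filter fun σ : Equiv.Perm (Fin n) => ∀ i ∈ X, σ i ∉ Y with hF
  set Z := (univ : Finset (Fin n)) \ Y with hZ
  have hZcard : #Z = n - #Y := by
    rw [hZ, card_sdiff_of_subset (subset_univ Y), card_univ, Fintype.card_fin]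
  set res : Equiv.Perm (Fin n) → (↥X → Fin n) := fun σ i => σ i.1 with hres
  have hfib : #F = ∑ g ∈ F.image res, #(F.filter fun σ => res σ = g) :=
    Finset.card_eq_sum_card_fiberwise (fun σ hσ => mem_image_of_mem res hσ)
  rw [hfib]
  have hfiber : ∀ g ∈ F.image res, #(F.filter fun σ => res σ = g) ≤ (n - #X).factorial := by
    intro g hg
    obtain ⟨σ₀, hσ₀F, hσ₀g⟩ := mem_image.mp hg
    set R := X.image (σ₀ : Fin n → Fin n) with hR
    have hRcard : #R = #X := card_image_of_injective X σ₀.injective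
    have hXc : #((univ : Finset (Fin n)) \ X) = n - #X := by
      rw [card_sdiff_of_subset (subset_univ X), card_univ, Fintype.card_fin]
    have hRc : #((univ : Finset (Fin n)) \ R) = n - #X := by
      rw [card_sdiff_of_subset (subset_univ R), card_univ, Fintype.card_fin, hRcard]
    have key : Fintype.card ↥(F.filter fun σ => res σ = g) ≤
        Fintype.card (↥((univ : Finset (Fin n)) \ X) ↪ ↥((univ : Finset (Fin n)) \ R)) := by
      apply Fintype.card_le_of_injective (fun σp =>
        ⟨fun j => ⟨σp.1 j.1, by
          have hmem := σp.2
          rw [mem_filter] at hmem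
          obtain ⟨hσF, hσg⟩ := hmem
          rw [mem_sdiff]
          refine ⟨mem_univ _, ?_⟩
          intro hmemR
          rw [hR, mem_image] at hmemR
          obtain ⟨i, hiX, hi⟩ := hmemR
          have h1 : σp.1 i = σ₀ i := by
            have := congrFun (hσg.trans hσ₀g.symm) ⟨i, hiX⟩
            exact this
          have h2 : σp.1 i = σp.1 j.1 := by rw [h1, hi]
          have h3 : i = j.1 := σp.1.injective h2
          have := j.2
          rw [mem_sdiff] at this
          exact this.2 (h3 ▸ hiX)⟩, by
          intro j j' hjj'
          have : σp.1 j.1 = σp.1 j'.1 := congrArg Subtype.val hjj'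
          exact Subtype.ext (σp.1.injective this)⟩)
      intro σp σp' hψ
      apply Subtype.ext
      apply Equiv.ext
      intro i
      by_cases hiX : i ∈ X
      · have h1 := σp.2; have h2 := σp'.2
        rw [mem_filter] at h1 h2
        have := (congrFun h1.2 ⟨i, hiX⟩).trans (congrFun h2.2 ⟨i, hiX⟩).symm
        exact this
      · have hj : i ∈ (univ : Finset (Fin n)) \ X := by rw [mem_sdiff]; exact ⟨mem_univ _, hiX⟩
        have := congrFun (congrArg (fun (e : ↥((univ : Finset (Fin n)) \ X) ↪ ↥((univ : Finset (Fin n)) \ R)) => (e : ↥((univ : Finset (Fin n)) \ X) → ↥((univ : Finset (Fin n)) \ R))) hψ) ⟨i, hj⟩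
        exact congrArg Subtype.val this
    rw [← Fintype.card_coe]
    calc Fintype.card ↥(F.filter fun σ => res σ = g)
        ≤ Fintype.card (↥((univ : Finset (Fin n)) \ X) ↪ ↥((univ : Finset (Fin n)) \ R)) := key
      _ = (n - #X).descFactorial (n - #X) := by
          rw [Fintype.card_embedding_eq, Fintype.card_coe, Fintype.card_coe, hXc, hRc]
      _ = (n - #X).factorial := Nat.descFactorial_self _
  have himg : #(F.image res) ≤ (n - #Y).descFactorial #X := by
    have key : Fintype.card ↥(F.image res) ≤ Fintype.card (↥X ↪ ↥Z) := by
      apply Fintype.card_le_of_injective (fun gp =>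
        ⟨fun i => ⟨gp.1 i, by
          obtain ⟨σ, hσF, hσg⟩ := mem_image.mp gp.2
          rw [hF, mem_filter] at hσF
          rw [mem_sdiff]
          refine ⟨mem_univ _, ?_⟩
          rw [← hσg]
          exact hσF.2 i.1 i.2⟩, by
          intro i i' hii'
          obtain ⟨σ, hσF, hσg⟩ := mem_image.mp gp.2
          have : gp.1 i = gp.1 i' := congrArg Subtype.val hii'
          rw [← hσg] at this
          exact Subtype.ext (σ.injective this)⟩)
      intro gp gp' hν
      apply Subtype.ext
      funext i
      have := congrFun (congrArg (fun (e : ↥X ↪ ↥Z) => (e : ↥X → ↥Z)) hν) i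
      exact congrArg Subtype.val this
    rw [← Fintype.card_coe]
    calc Fintype.card ↥(F.image res) ≤ Fintype.card (↥X ↪ ↥Z) := key
      _ = (#Z).descFactorial #X := by
          rw [Fintype.card_embedding_eq, Fintype.card_coe, Fintype.card_coe]
      _ = (n - #Y).descFactorial #X := by rw [hZcard]
  calc ∑ g ∈ F.image res, #(F.filter fun σ => res σ = g)
      ≤ ∑ _g ∈ F.image res, (n - #X).factorial := Finset.sum_le_sum hfiber
    _ = #(F.image res) * (n - #X).factorial := by rw [Finset.sum_const, smul_eq_mul]
    _ ≤ (n - #Y).descFactorial #X * (n - #X).factorial :=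
        Nat.mul_le_mul_right _ himg


open scoped Classical in
/-- Deterministic lemma: if `σ` is "spread" with respect to `G` (every neighborhood image
intersects every neighborhood in at least `ξn` elements), then `G` together with any
sub-matching of `σ` of size at least `(1-ξ)n` has a perfect matching. -/
lemma bprm_deterministic {n : ℕ} (G : Finset (Fin n × Fin n)) (β ξ : ℝ)
    (hβpos : 0 < β) (hξβ : ξ ≤ β / 2)
    (hA : ∀ a : Fin n, β * n ≤ (#(univ.filter fun b => (a, b) ∈ G) : ℝ))
    (σ : Equiv.Perm (Fin n))
    (hgood : ∀ a₀ b₀ : Fin n, ξ * n ≤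
        (#(((univ.filter fun a => (a, b₀) ∈ G).image σ) ∩ (univ.filter fun b => (a₀, b) ∈ G)) : ℝ))
    (M : Finset (Fin n × Fin n)) (hM : M ⊆ univ.filter fun e : Fin n × Fin n => σ e.1 = e.2)
    (hMcard : (1 - ξ) * n ≤ (#M : ℝ)) :
    ∃ τ : Equiv.Perm (Fin n), ∀ a : Fin n, (a, τ a) ∈ G ∪ M := by
  set t : Fin n → Finset (Fin n) := fun a => univ.filter fun b => (a, b) ∈ G ∪ M with ht
  have hHall : ∀ S : Finset (Fin n), #S ≤ #(S.biUnion t) := by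
    intro S
    by_contra hlt
    push_neg at hlt
    have hSne : S.Nonempty := by
      rw [← card_pos]
      exact lt_of_le_of_lt (Nat.zero_le _) hlt
    have hnpos : 0 < n := (hSne.choose : Fin n).pos
    set W := S.biUnion t with hW
    have hsubNA : ∀ a ∈ S, (univ.filter fun b => (a, b) ∈ G) ⊆ W := by
      intro a ha b hb
      rw [mem_filter] at hb
      exact mem_biUnion.mpr ⟨a, ha, mem_filter.mpr ⟨mem_univ _, mem_union_left _ hb.2⟩⟩
    rcases le_or_gt (#S : ℝ) (β * n) with hcase | hcase
    · obtain ⟨a, ha⟩ := hSne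
      have h1 : (#S : ℝ) ≤ (#W : ℝ) :=
        le_trans hcase (le_trans (hA a) (by exact_mod_cast card_le_card (hsubNA a ha)))
      have h2 : (#W : ℝ) < (#S : ℝ) := by exact_mod_cast hlt
      linarith
    · set cov := M.image Prod.fst with hcov
      have hMeq : ∀ e ∈ M, e = (e.1, σ e.1) := by
        intro e he
        have := hM he
        rw [mem_filter] at this
        exact Prod.ext rfl this.2.symm
      have hcovM : #cov = #M := by
        apply card_image_of_injOn
        intro e he e' he' hee
        rw [hMeq e he, hMeq e' he', hee]
      have hcovmem : ∀ a ∈ cov, (a, σ a) ∈ M := by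
        intro a ha
        obtain ⟨e, heM, he⟩ := mem_image.mp ha
        have := hMeq e heM
        rw [he] at this
        rwa [← this]
      set Sc := S ∩ cov with hSc
      have hσcov : Sc.image σ ⊆ W := by
        intro x hx
        obtain ⟨a, ha, hax⟩ := mem_image.mp hx
        rw [hSc, mem_inter] at ha
        refine mem_biUnion.mpr ⟨a, ha.1, ?_⟩
        rw [mem_filter, ← hax]
        exact ⟨mem_univ _, mem_union_right _ (hcovmem a ha.2)⟩
      have hMn : (#M : ℝ) ≤ n := by
        rw [← hcovM]
        have := card_le_univ cov
        rw [Fintype.card_fin] at this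
        exact_mod_cast this
      have huncov : (#((univ : Finset (Fin n)) \ cov) : ℝ) = n - #M := by
        rw [cast_card_sdiff (subset_univ cov), card_univ, Fintype.card_fin, hcovM]
      have hScc : (#S : ℝ) ≤ #Sc + ((n : ℝ) - #M) := by
        have hsub : S ⊆ Sc ∪ ((univ : Finset (Fin n)) \ cov) := by
          intro a ha
          by_cases hac : a ∈ cov
          · exact mem_union_left _ (mem_inter.mpr ⟨ha, hac⟩)
          · exact mem_union_right _ (mem_sdiff.mpr ⟨mem_univ _, hac⟩)
        have := le_trans (card_le_card hsub) (card_union_le _ _)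
        rw [← huncov]
        exact_mod_cast this
      have hRξ : (n : ℝ) - #M ≤ ξ * n := by nlinarith [hMcard]
      have hScpos : (0 : ℝ) < #Sc := by
        have : (β / 2) * n ≤ (#Sc : ℝ) := by nlinarith
        have hn1 : (1:ℝ) ≤ (n:ℝ) := by exact_mod_cast hnpos
        nlinarith
      obtain ⟨a₀, ha₀⟩ := card_pos.mp (by exact_mod_cast hScpos)
      have ha₀S : a₀ ∈ S := (mem_inter.mp ha₀).1
      have hWn : #W < n := by
        have h1 : #S ≤ n := by
          have := card_le_univ S
          rwa [Fintype.card_fin] at this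
        exact lt_of_lt_of_le hlt h1
      have hcompl : ((univ : Finset (Fin n)) \ W).Nonempty := by
        rw [← card_pos, card_sdiff_of_subset (subset_univ W), card_univ, Fintype.card_fin]
        omega
      obtain ⟨b₀, hb₀mem⟩ := hcompl
      have hb₀W : b₀ ∉ W := (mem_sdiff.mp hb₀mem).2
      have hNBS : ∀ a ∈ (univ.filter fun a => (a, b₀) ∈ G), a ∉ S := by
        intro a ha haS
        rw [mem_filter] at ha
        exact hb₀W (mem_biUnion.mpr ⟨a, haS, mem_filter.mpr ⟨mem_univ _, mem_union_left _ ha.2⟩⟩)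
      set I := ((univ.filter fun a => (a, b₀) ∈ G).image σ) ∩ (univ.filter fun b => (a₀, b) ∈ G) with hI
      have hIsub : I ⊆ W \ (Sc.image σ) := by
        intro x hx
        rw [hI, mem_inter] at hx
        rw [mem_sdiff]
        constructor
        · exact hsubNA a₀ ha₀S hx.2
        · intro hxSc
          obtain ⟨a, haNB, hax⟩ := mem_image.mp hx.1
          obtain ⟨a', ha'Sc, hax'⟩ := mem_image.mp hxSc
          have : a = a' := σ.injective (by rw [hax, hax'])
          exact hNBS a haNB (this ▸ (mem_inter.mp ha'Sc).1)
      have hcardI : (#I : ℝ) ≤ (#W : ℝ) - #Sc := by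
        have h1 : (#I : ℝ) ≤ (#(W \ Sc.image σ)) := by exact_mod_cast card_le_card hIsub
        rw [cast_card_sdiff hσcov] at h1
        rwa [card_image_of_injective _ σ.injective] at h1
      have hWS : (#W : ℝ) ≤ (#S : ℝ) - 1 := by
        have : #W + 1 ≤ #S := hlt
        have := (Nat.cast_le (α := ℝ)).mpr this
        push_cast at this
        linarith
      have := hgood a₀ b₀
      rw [← hI] at this
      have hfinal : ξ * n ≤ ξ * n - 1 := by
        calc ξ * n ≤ (#I : ℝ) := this
          _ ≤ (#W : ℝ) - #Sc := hcardI
          _ ≤ ((#S : ℝ) - 1) - ((#S : ℝ) - ((n : ℝ) - #M)) := by linarith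
          _ = ((n : ℝ) - #M) - 1 := by ring
          _ ≤ ξ * n - 1 := by linarith
      linarith
  obtain ⟨f, hinj, hft⟩ := (Finset.all_card_le_biUnion_card_iff_exists_injective t).mp hHall
  refine ⟨Equiv.ofBijective f ((Finite.injective_iff_bijective).mp hinj), fun a => ?_⟩
  have := hft a
  rw [ht, mem_filter] at this
  exact this.2



set_option maxHeartbeats 2000000 in
open scoped Classical in
/-- For every `α > 0` there is `ξ > 0` such that: for every `ε > 0` there is `n₀` such that
for all `n ≥ n₀` and every bipartite graph `G` between two copies of `Fin n` (edges are pairs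
`(a, b)`) with minimum degree at least `αn`, the proportion of perfect matchings `σ` (i.e.
bijections, viewed as the edge sets `{(a, σ a)}`) such that for every sub-matching `M` of `σ`
with at least `(1-ξ)n` edges the graph `G ∪ M` has a perfect matching, is at least `1 - ε`. -/
theorem bipartite_plus_random_near_perfect_matching (α : ℝ) (hα : 0 < α) :
    ∃ ξ : ℝ, 0 < ξ ∧ ∀ ε : ℝ, 0 < ε → ∃ n₀ : ℕ, ∀ n : ℕ, n₀ ≤ n →
      ∀ G : Finset (Fin n × Fin n),
        (∀ a : Fin n, α * n ≤ ((G.filter fun e => e.1 = a).card : ℝ)) →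
        (∀ b : Fin n, α * n ≤ ((G.filter fun e => e.2 = b).card : ℝ)) →
        (1 - ε) * ((univ : Finset (Equiv.Perm (Fin n))).card : ℝ) ≤
          (((univ : Finset (Equiv.Perm (Fin n))).filter fun σ =>
              ∀ M : Finset (Fin n × Fin n),
                M ⊆ (univ.filter fun e : Fin n × Fin n => σ e.1 = e.2) →
                (1 - ξ) * (n : ℝ) ≤ (M.card : ℝ) →
                ∃ τ : Equiv.Perm (Fin n), ∀ a : Fin n, (a, τ a) ∈ G ∪ M).card : ℝ) := by
  have hβpos : (0:ℝ) < min α (1/2) := lt_min hα (by norm_num)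
  set β := min α (1/2) with hβ
  have hβhalf : β ≤ 1/2 := min_le_right _ _
  have hβα : β ≤ α := min_le_left _ _
  set Lg := Real.log (2 * Real.exp 1) with hLg
  have hLgpos : 0 < Lg := Real.log_pos (by nlinarith [Real.exp_pos 1, Real.add_one_le_exp (1:ℝ)])
  set ξ := min (β/2) (min (β^2/(16*(Lg+1))) ((β^2/16)^2)) with hξdef
  have hξpos : 0 < ξ := by
    apply lt_min (by positivity)
    exact lt_min (by positivity) (by positivity)
  have hξβ2 : ξ ≤ β/2 := min_le_left _ _
  have hξ1 : ξ ≤ 1 := le_trans hξβ2 (by linarith)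
  -- the key smallness property of ξ
  have hξsum : ξ * Real.log (2 * Real.exp 1 / ξ) ≤ β^2/4 := by
    have h1 : Real.log (2 * Real.exp 1 / ξ) = Lg + Real.log (1/ξ) := by
      rw [Real.log_div (by positivity) (ne_of_gt hξpos), one_div, Real.log_inv, hLg]
      ring
    have h2 : ξ * Lg ≤ β^2/16 := by
      have hξa : ξ ≤ β^2/(16*(Lg+1)) := le_trans (min_le_right _ _) (min_le_left _ _)
      have : ξ * (Lg + 1) ≤ β^2/16 := by
        calc ξ * (Lg+1) ≤ (β^2/(16*(Lg+1))) * (Lg+1) := by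
              apply mul_le_mul_of_nonneg_right hξa (by positivity)
          _ = β^2/16 := by field_simp
      nlinarith [hξpos]
    have h3 : ξ * Real.log (1/ξ) ≤ β^2/8 := by
      have hs : Real.sqrt ξ ≤ β^2/16 := by
        have hξb : ξ ≤ (β^2/16)^2 := le_trans (min_le_right _ _) (min_le_right _ _)
        calc Real.sqrt ξ ≤ Real.sqrt ((β^2/16)^2) := Real.sqrt_le_sqrt hξb
          _ = β^2/16 := Real.sqrt_sq (by positivity)
      have hlog : Real.log (1/ξ) ≤ 2 / Real.sqrt ξ := by
        have hsq : (1/Real.sqrt ξ)^2 = 1/ξ := by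
          rw [div_pow, one_pow, Real.sq_sqrt (le_of_lt hξpos)]
        have : Real.log (1/ξ) = 2 * Real.log (1/Real.sqrt ξ) := by
          rw [← hsq, Real.log_pow]
          push_cast; ring
        rw [this]
        have := Real.log_le_sub_one_of_pos (show (0:ℝ) < 1/Real.sqrt ξ by positivity)
        have h4 : Real.log (1/Real.sqrt ξ) ≤ 1/Real.sqrt ξ := by linarith
        calc 2 * Real.log (1/Real.sqrt ξ) ≤ 2 * (1/Real.sqrt ξ) := by linarith
          _ = 2/Real.sqrt ξ := by ring
      have hsqrtpos : 0 < Real.sqrt ξ := Real.sqrt_pos.mpr hξpos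
      calc ξ * Real.log (1/ξ) ≤ ξ * (2/Real.sqrt ξ) := by
            apply mul_le_mul_of_nonneg_left hlog (le_of_lt hξpos)
        _ = 2 * (ξ/Real.sqrt ξ) := by ring
        _ = 2 * Real.sqrt ξ := by rw [Real.div_sqrt]
        _ ≤ 2 * (β^2/16) := by linarith
        _ = β^2/8 := by ring
    rw [h1, mul_add]
    nlinarith [sq_nonneg β]
  refine ⟨ξ, hξpos, ?_⟩
  intro ε hε
  -- choice of n₀
  have hexplt : Real.exp (-(β^2/4)) < 1 := by
    rw [Real.exp_lt_one_iff]
    nlinarith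
  have htend : Filter.Tendsto (fun m : ℕ => (m:ℝ)^2 * (Real.exp (-(β^2/4)))^m)
      Filter.atTop (nhds 0) :=
    tendsto_pow_const_mul_const_pow_of_lt_one 2 (le_of_lt (Real.exp_pos _)) hexplt
  obtain ⟨N₁, hN₁⟩ := Filter.eventually_atTop.mp (htend.eventually (gt_mem_nhds hε))
  refine ⟨max N₁ (max (Nat.ceil ((2:ℝ)/ξ)) 1), ?_⟩
  intro n hn G hA hB
  have hnN₁ : N₁ ≤ n := le_trans (le_max_left _ _) hn
  have hnceil : Nat.ceil ((2:ℝ)/ξ) ≤ n := le_trans (le_trans (le_max_left _ _) (le_max_right _ _)) hn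
  have hn1 : 1 ≤ n := le_trans (le_trans (le_max_right _ _) (le_max_right _ _)) hn
  have hnR : (2:ℝ)/ξ ≤ n := by
    have := Nat.ceil_le.mp (le_refl (Nat.ceil ((2:ℝ)/ξ)))
    exact le_trans this (by exact_mod_cast hnceil)
  have hnpos : (0:ℝ) < n := by
    have : (0:ℝ) < 2/ξ := by positivity
    linarith
  have hξn2 : 2 ≤ ξ * n := by
    calc (2:ℝ) = ξ * (2/ξ) := by field_simp
      _ ≤ ξ * n := mul_le_mul_of_nonneg_left hnR (le_of_lt hξpos)
  -- neighborhoods and degree bounds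
  set NA := fun a : Fin n => univ.filter fun b => (a, b) ∈ G with hNA
  set NB := fun b : Fin n => univ.filter fun a => (a, b) ∈ G with hNB
  have hdegA : ∀ a : Fin n, β * n ≤ (#(NA a) : ℝ) := by
    intro a
    have himg : (G.filter fun e => e.1 = a).image Prod.snd = NA a := by
      ext b
      simp only [mem_image, mem_filter, mem_univ, true_and, hNA]
      constructor
      · rintro ⟨e, ⟨heG, he1⟩, he2⟩
        have he : e = (a, b) := Prod.ext he1 he2
        rwa [he] at heG
      · intro h
        exact ⟨(a, b), ⟨h, rfl⟩, rfl⟩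
    have hinj : #((G.filter fun e => e.1 = a)) = #(NA a) := by
      rw [← himg]
      rw [eq_comm]
      apply card_image_of_injOn
      intro e he e' he' hee
      rw [mem_coe, mem_filter] at he he'
      exact Prod.ext (he.2.trans he'.2.symm) hee
    calc β * n ≤ α * n := mul_le_mul_of_nonneg_right hβα (le_of_lt hnpos)
      _ ≤ (#((G.filter fun e => e.1 = a)) : ℝ) := hA a
      _ = (#(NA a) : ℝ) := by exact_mod_cast hinj
  have hdegB : ∀ b : Fin n, β * n ≤ (#(NB b) : ℝ) := by
    intro b
    have himg : (G.filter fun e => e.2 = b).image Prod.fst = NB b := by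
      ext a
      simp only [mem_image, mem_filter, mem_univ, true_and, hNB]
      constructor
      · rintro ⟨e, ⟨heG, he2⟩, he1⟩
        have he : e = (a, b) := Prod.ext he1 he2
        rwa [he] at heG
      · intro h
        exact ⟨(a, b), ⟨h, rfl⟩, rfl⟩
    have hinj : #((G.filter fun e => e.2 = b)) = #(NB b) := by
      rw [← himg]
      rw [eq_comm]
      apply card_image_of_injOn
      intro e he e' he' hee
      rw [mem_coe, mem_filter] at he he'
      exact Prod.ext hee (he.2.trans he'.2.symm)
    calc β * n ≤ α * n := mul_le_mul_of_nonneg_right hβα (le_of_lt hnpos)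
      _ ≤ (#((G.filter fun e => e.2 = b)) : ℝ) := hB b
      _ = (#(NB b) : ℝ) := by exact_mod_cast hinj
  set Good := fun σ : Equiv.Perm (Fin n) =>
    ∀ a₀ b₀ : Fin n, ξ * n ≤ (#(((NB b₀).image σ) ∩ NA a₀) : ℝ) with hGood
  -- deterministic part
  have hsub : (univ.filter Good) ⊆
      (univ.filter fun σ : Equiv.Perm (Fin n) =>
        ∀ M : Finset (Fin n × Fin n),
          M ⊆ (univ.filter fun e : Fin n × Fin n => σ e.1 = e.2) →
          (1 - ξ) * (n : ℝ) ≤ (M.card : ℝ) →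
          ∃ τ : Equiv.Perm (Fin n), ∀ a : Fin n, (a, τ a) ∈ G ∪ M) := by
    intro σ hσ
    rw [mem_filter] at hσ ⊢
    refine ⟨mem_univ _, ?_⟩
    intro M hM hMcard
    exact bprm_deterministic G β ξ hβpos hξβ2 hdegA σ hσ.2 M hM hMcard
  -- probabilistic part
  have hbad : (#(univ.filter fun σ : Equiv.Perm (Fin n) => ¬ Good σ) : ℝ) ≤
      ε * ((n.factorial : ℕ) : ℝ) := by
    set K := Nat.floor (ξ * (n:ℝ)) with hK
    have hKR : (K:ℝ) ≤ ξ * n := Nat.floor_le (by positivity)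
    have hK1 : 1 ≤ K := Nat.le_floor (by push_cast; linarith)
    have hKRpos : (0:ℝ) < K := by exact_mod_cast hK1
    have hKhalf : ξ * n ≤ 2 * K := by
      have h1 : ξ * n - 1 < (K:ℝ) := Nat.sub_one_lt_floor _
      linarith
    have hKx : ∀ b₀ : Fin n, K ≤ #(NB b₀) := by
      intro b₀
      have h := hdegB b₀
      have : (K:ℝ) ≤ (#(NB b₀):ℝ) := by nlinarith
      exact_mod_cast this
    set E := Real.exp (-(β^2/2) * n) * ((n.factorial : ℕ) : ℝ) with hE
    have hEpos : 0 ≤ E := by positivity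
    set U := univ.biUnion (fun a₀ : Fin n => univ.biUnion (fun b₀ : Fin n =>
      ((NB b₀).powersetCard (#(NB b₀) - K)).biUnion (fun X' =>
        univ.filter fun σ : Equiv.Perm (Fin n) => ∀ i ∈ X', σ i ∉ NA a₀))) with hU
    have hcover : (univ.filter fun σ : Equiv.Perm (Fin n) => ¬ Good σ) ⊆ U := by
      intro σ hσ
      rw [mem_filter] at hσ
      obtain ⟨-, hbadσ⟩ := hσ
      rw [hGood] at hbadσ
      simp only [not_forall, not_le] at hbadσ
      obtain ⟨a₀, b₀, hlt⟩ := hbadσ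
      set Bd := (NB b₀).filter (fun i => σ i ∈ NA a₀) with hBd
      have him : ((NB b₀).image σ) ∩ NA a₀ = Bd.image σ := by
        ext xx
        simp only [mem_inter, mem_image, hBd, mem_filter]
        constructor
        · rintro ⟨⟨i, hi, hix⟩, hxx⟩
          exact ⟨i, ⟨hi, by rwa [hix]⟩, hix⟩
        · rintro ⟨i, ⟨hi, hiy⟩, hix⟩
          exact ⟨⟨i, hi, hix⟩, by rwa [← hix]⟩
      have hBdcard : (#Bd : ℝ) < ξ * n := by
        rw [← card_image_of_injective Bd σ.injective, ← him]
        exact hlt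
      have hBdK : #Bd ≤ K := Nat.le_floor (le_of_lt hBdcard)
      have hsdiffsub : Bd ⊆ NB b₀ := filter_subset _ _
      have hsub2 : #(NB b₀) - K ≤ #(NB b₀ \ Bd) := by
        rw [card_sdiff_of_subset hsdiffsub]
        omega
      obtain ⟨X', hX'sub, hX'card⟩ := exists_subset_card_eq (s := NB b₀ \ Bd) (n := #(NB b₀) - K) hsub2
      refine mem_biUnion.mpr ⟨a₀, mem_univ _, mem_biUnion.mpr ⟨b₀, mem_univ _,
        mem_biUnion.mpr ⟨X', ?_, ?_⟩⟩⟩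
      · exact mem_powersetCard.mpr ⟨le_trans hX'sub sdiff_subset, hX'card⟩
      · rw [mem_filter]
        refine ⟨mem_univ _, ?_⟩
        intro i hi hiNA
        have := hX'sub hi
        rw [mem_sdiff] at this
        exact this.2 (by rw [hBd, mem_filter]; exact ⟨this.1, hiNA⟩)
    have keybound : ∀ (a₀ b₀ : Fin n) (X' : Finset (Fin n)),
        X' ∈ (NB b₀).powersetCard (#(NB b₀) - K) →
        (#(univ.filter fun σ : Equiv.Perm (Fin n) => ∀ i ∈ X', σ i ∉ NA a₀) : ℝ) ≤ E := by
      intro a₀ b₀ X' hX'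
      obtain ⟨hX'sub, hX'card⟩ := mem_powersetCard.mp hX'
      have hxn : #(NB b₀) ≤ n := by
        have := card_le_univ (NB b₀); rwa [Fintype.card_fin] at this
      have hyn : #(NA a₀) ≤ n := by
        have := card_le_univ (NA a₀); rwa [Fintype.card_fin] at this
      have hLx : #X' ≤ #(NB b₀) := card_le_card hX'sub
      have hLn : #X' ≤ n := le_trans hLx hxn
      have hLcast : (#X' : ℝ) = (#(NB b₀) : ℝ) - (K : ℝ) := by
        rw [hX'card]
        exact Nat.cast_sub (hKx b₀)
      have hLR : (β/2) * n ≤ (#X' : ℝ) := by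
        have := hdegB b₀
        rw [hLcast]
        nlinarith
      have hcnt := bprm_count_perm X' (NA a₀)
      have hcntR : (#(univ.filter fun σ : Equiv.Perm (Fin n) => ∀ i ∈ X', σ i ∉ NA a₀) : ℝ) ≤
          ((n - #(NA a₀)).descFactorial #X' : ℝ) * (((n - #X').factorial : ℕ) : ℝ) := by
        exact_mod_cast hcnt
      have hratio := bprm_descFactorial_ratio (n - #(NA a₀)) n (Nat.sub_le n _) #X'
      have hratioR : ((n - #(NA a₀)).descFactorial #X' : ℝ) * ((n:ℝ))^(#X') ≤
          (((n - #(NA a₀) : ℕ) : ℝ))^(#X') * ((n.descFactorial #X' : ℕ) : ℝ) := by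
        exact_mod_cast hratio
      have hnpow : (0:ℝ) < ((n:ℝ))^(#X') := by positivity
      have h2 : ((n - #(NA a₀)).descFactorial #X' : ℝ) ≤
          ((((n - #(NA a₀) : ℕ) : ℝ))/n)^(#X') * ((n.descFactorial #X' : ℕ) : ℝ) := by
        rw [div_pow]
        rw [div_mul_eq_mul_div, le_div_iff₀ hnpow]
        exact hratioR
      have hfact : ((n.descFactorial #X' : ℕ) : ℝ) * (((n - #X').factorial : ℕ) : ℝ)
          = ((n.factorial : ℕ) : ℝ) := by
        have := Nat.factorial_mul_descFactorial hLn
        exact_mod_cast (by rw [mul_comm] at this; exact this)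
      have hbase : ((((n - #(NA a₀) : ℕ) : ℝ))/n) ≤ Real.exp (-β) := by
        have hcst : (((n - #(NA a₀) : ℕ) : ℝ)) = (n:ℝ) - #(NA a₀) := by
          exact Nat.cast_sub hyn
        have hd := hdegA a₀
        have h1b : ((((n - #(NA a₀) : ℕ) : ℝ))/n) ≤ 1 - β := by
          rw [hcst, div_le_iff₀ hnpos]
          nlinarith
        have h2b : 1 - β ≤ Real.exp (-β) := by
          have := Real.add_one_le_exp (-β)
          linarith
        linarith
      have hbase0 : 0 ≤ ((((n - #(NA a₀) : ℕ) : ℝ))/n) := by positivity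
      have h4 : (((((n - #(NA a₀) : ℕ) : ℝ))/n))^(#X') ≤ Real.exp (-β) ^ (#X') :=
        pow_le_pow_left₀ hbase0 hbase _
      have h5 : Real.exp (-β) ^ (#X') = Real.exp ((#X' : ℝ) * (-β)) :=
        (Real.exp_nat_mul _ _).symm
      have h6 : Real.exp ((#X' : ℝ) * (-β)) ≤ Real.exp (-(β^2/2) * n) := by
        apply Real.exp_le_exp.mpr
        nlinarith
      calc (#(univ.filter fun σ : Equiv.Perm (Fin n) => ∀ i ∈ X', σ i ∉ NA a₀) : ℝ)
          ≤ ((n - #(NA a₀)).descFactorial #X' : ℝ) * (((n - #X').factorial : ℕ) : ℝ) := hcntR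
        _ ≤ (((((n - #(NA a₀) : ℕ) : ℝ))/n)^(#X') * ((n.descFactorial #X' : ℕ) : ℝ)) *
            (((n - #X').factorial : ℕ) : ℝ) := by
            apply mul_le_mul_of_nonneg_right h2 (by positivity)
        _ = ((((n - #(NA a₀) : ℕ) : ℝ))/n)^(#X') * ((n.factorial : ℕ) : ℝ) := by
            rw [mul_assoc, hfact]
        _ ≤ Real.exp (-(β^2/2) * n) * ((n.factorial : ℕ) : ℝ) := by
            apply mul_le_mul_of_nonneg_right _ (by positivity)
            calc ((((n - #(NA a₀) : ℕ) : ℝ))/n)^(#X') ≤ Real.exp (-β) ^ (#X') := h4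
              _ = Real.exp ((#X' : ℝ) * (-β)) := h5
              _ ≤ Real.exp (-(β^2/2) * n) := h6
    have hchoose : ((n.choose K : ℕ) : ℝ) ≤ Real.exp ((β^2/4) * n) := by
      have h1 : ((n.choose K : ℕ) : ℝ) * ((K.factorial : ℕ) : ℝ) ≤ ((n:ℝ))^K := by
        have hnat : K.factorial * n.choose K ≤ n ^ K := by
          rw [← Nat.descFactorial_eq_factorial_mul_choose]
          exact Nat.descFactorial_le_pow n K
        calc ((n.choose K : ℕ) : ℝ) * ((K.factorial : ℕ) : ℝ)
            = (((K.factorial * n.choose K : ℕ) : ℝ)) := by push_cast; ring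
          _ ≤ (((n ^ K : ℕ)) : ℝ) := by exact_mod_cast hnat
          _ = ((n:ℝ))^K := by push_cast; ring
      have h2 := bprm_pow_le_exp_mul_factorial K
      have hKfacpos : (0:ℝ) < ((K.factorial : ℕ) : ℝ) := by
        exact_mod_cast K.factorial_pos
      have hKpowpos : (0:ℝ) < ((K:ℝ))^K := by positivity
      have h3 : ((n.choose K : ℕ) : ℝ) ≤ ((n:ℝ))^K * Real.exp K / ((K:ℝ))^K := by
        rw [le_div_iff₀ hKpowpos]
        calc ((n.choose K : ℕ) : ℝ) * ((K:ℝ))^K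
            ≤ ((n.choose K : ℕ) : ℝ) * (Real.exp K * ((K.factorial : ℕ) : ℝ)) := by
              apply mul_le_mul_of_nonneg_left h2 (by positivity)
          _ = (((n.choose K : ℕ) : ℝ) * ((K.factorial : ℕ) : ℝ)) * Real.exp K := by ring
          _ ≤ ((n:ℝ))^K * Real.exp K := by
              apply mul_le_mul_of_nonneg_right h1 (by positivity)
      have h4 : ((n:ℝ))^K * Real.exp K / ((K:ℝ))^K = ((n:ℝ)/K)^K * Real.exp K := by
        rw [div_pow]
        ring
      have h5 : (n:ℝ)/K ≤ 2/ξ := by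
        rw [div_le_div_iff₀ hKRpos hξpos]
        nlinarith
      have h6 : ((n:ℝ)/K)^K ≤ ((2:ℝ)/ξ)^K :=
        pow_le_pow_left₀ (by positivity) h5 _
      have hexpK : Real.exp (K:ℝ) = Real.exp 1 ^ K := by
        rw [← Real.exp_nat_mul, mul_one]
      have h7 : ((2:ℝ)/ξ)^K * Real.exp K = (2 * Real.exp 1 / ξ)^K := by
        rw [hexpK, ← mul_pow]
        congr 1
        field_simp
      have hb1 : (1:ℝ) ≤ 2 * Real.exp 1 / ξ := by
        rw [le_div_iff₀ hξpos, one_mul]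
        nlinarith [Real.add_one_le_exp (1:ℝ)]
      have hbpos : (0:ℝ) < 2 * Real.exp 1 / ξ := lt_of_lt_of_le one_pos hb1
      have h9 : (2 * Real.exp 1 / ξ)^K = Real.exp ((K:ℝ) * Real.log (2 * Real.exp 1 / ξ)) := by
        conv_lhs => rw [← Real.exp_log hbpos]
        rw [← Real.exp_nat_mul]
      have hlogb : 0 ≤ Real.log (2 * Real.exp 1 / ξ) := Real.log_nonneg hb1
      have h10 : (K:ℝ) * Real.log (2 * Real.exp 1 / ξ) ≤ (β^2/4) * n := by
        calc (K:ℝ) * Real.log (2 * Real.exp 1 / ξ)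
            ≤ (ξ * n) * Real.log (2 * Real.exp 1 / ξ) := mul_le_mul_of_nonneg_right hKR hlogb
          _ = (n:ℝ) * (ξ * Real.log (2 * Real.exp 1 / ξ)) := by ring
          _ ≤ (n:ℝ) * (β^2/4) := mul_le_mul_of_nonneg_left hξsum (le_of_lt hnpos)
          _ = (β^2/4) * n := by ring
      calc ((n.choose K : ℕ) : ℝ) ≤ ((n:ℝ))^K * Real.exp K / ((K:ℝ))^K := h3
        _ = ((n:ℝ)/K)^K * Real.exp K := h4
        _ ≤ ((2:ℝ)/ξ)^K * Real.exp K := by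
            apply mul_le_mul_of_nonneg_right h6 (by positivity)
        _ = (2 * Real.exp 1 / ξ)^K := h7
        _ = Real.exp ((K:ℝ) * Real.log (2 * Real.exp 1 / ξ)) := h9
        _ ≤ Real.exp ((β^2/4) * n) := Real.exp_le_exp.mpr h10
    -- final counting chain
    have hcard0 : #(univ.filter fun σ : Equiv.Perm (Fin n) => ¬ Good σ) ≤ #U := card_le_card hcover
    have hcard1 : #U ≤ ∑ a₀ ∈ univ, ∑ b₀ ∈ univ, ∑ X' ∈ (NB b₀).powersetCard (#(NB b₀) - K),
        #(univ.filter fun σ : Equiv.Perm (Fin n) => ∀ i ∈ X', σ i ∉ NA a₀) := by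
      refine le_trans card_biUnion_le (sum_le_sum fun a₀ _ => ?_)
      refine le_trans card_biUnion_le (sum_le_sum fun b₀ _ => ?_)
      exact card_biUnion_le
    have hinner : ∀ a₀ b₀ : Fin n, (∑ X' ∈ (NB b₀).powersetCard (#(NB b₀) - K),
        (#(univ.filter fun σ : Equiv.Perm (Fin n) => ∀ i ∈ X', σ i ∉ NA a₀) : ℝ)) ≤
        ((n.choose K : ℕ) : ℝ) * E := by
      intro a₀ b₀
      have hxn : #(NB b₀) ≤ n := by
        have := card_le_univ (NB b₀); rwa [Fintype.card_fin] at this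
      have hpc : (#((NB b₀).powersetCard (#(NB b₀) - K)) : ℝ) ≤ ((n.choose K : ℕ) : ℝ) := by
        rw [card_powersetCard]
        have heq : (#(NB b₀)).choose (#(NB b₀) - K) = (#(NB b₀)).choose K :=
          Nat.choose_symm (hKx b₀)
        rw [heq]
        exact_mod_cast Nat.choose_le_choose K hxn
      calc (∑ X' ∈ (NB b₀).powersetCard (#(NB b₀) - K),
            (#(univ.filter fun σ : Equiv.Perm (Fin n) => ∀ i ∈ X', σ i ∉ NA a₀) : ℝ))
          ≤ ∑ _X' ∈ (NB b₀).powersetCard (#(NB b₀) - K), E :=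
            sum_le_sum (fun X' hX' => keybound a₀ b₀ X' hX')
        _ = (#((NB b₀).powersetCard (#(NB b₀) - K)) : ℝ) * E := by
            rw [sum_const, nsmul_eq_mul]
        _ ≤ ((n.choose K : ℕ) : ℝ) * E := mul_le_mul_of_nonneg_right hpc hEpos
    have hsumR : (∑ a₀ ∈ univ, ∑ b₀ ∈ univ, ∑ X' ∈ (NB b₀).powersetCard (#(NB b₀) - K),
        (#(univ.filter fun σ : Equiv.Perm (Fin n) => ∀ i ∈ X', σ i ∉ NA a₀) : ℝ)) ≤
        (n:ℝ) * ((n:ℝ) * (((n.choose K : ℕ) : ℝ) * E)) := by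
      have hstep : ∀ a₀ : Fin n, (∑ b₀ ∈ univ, ∑ X' ∈ (NB b₀).powersetCard (#(NB b₀) - K),
          (#(univ.filter fun σ : Equiv.Perm (Fin n) => ∀ i ∈ X', σ i ∉ NA a₀) : ℝ)) ≤
          (n:ℝ) * (((n.choose K : ℕ) : ℝ) * E) := by
        intro a₀
        calc (∑ b₀ ∈ univ, ∑ X' ∈ (NB b₀).powersetCard (#(NB b₀) - K),
              (#(univ.filter fun σ : Equiv.Perm (Fin n) => ∀ i ∈ X', σ i ∉ NA a₀) : ℝ))
            ≤ ∑ _b₀ ∈ (univ : Finset (Fin n)), ((n.choose K : ℕ) : ℝ) * E :=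
              sum_le_sum (fun b₀ _ => hinner a₀ b₀)
          _ = (n:ℝ) * (((n.choose K : ℕ) : ℝ) * E) := by
              rw [sum_const, card_univ, Fintype.card_fin, nsmul_eq_mul]
      calc (∑ a₀ ∈ univ, ∑ b₀ ∈ univ, ∑ X' ∈ (NB b₀).powersetCard (#(NB b₀) - K),
            (#(univ.filter fun σ : Equiv.Perm (Fin n) => ∀ i ∈ X', σ i ∉ NA a₀) : ℝ))
          ≤ ∑ _a₀ ∈ (univ : Finset (Fin n)), (n:ℝ) * (((n.choose K : ℕ) : ℝ) * E) :=
            sum_le_sum (fun a₀ _ => hstep a₀)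
        _ = (n:ℝ) * ((n:ℝ) * (((n.choose K : ℕ) : ℝ) * E)) := by
            rw [sum_const, card_univ, Fintype.card_fin, nsmul_eq_mul]
    have hfinal : (n:ℝ) * ((n:ℝ) * (((n.choose K : ℕ) : ℝ) * E)) ≤ ε * ((n.factorial : ℕ) : ℝ) := by
      have hNn := hN₁ n hnN₁
      have hexpeq : Real.exp (-(β^2/4))^n = Real.exp (-(β^2/4) * n) := by
        rw [← Real.exp_nat_mul]
        ring_nf
      have hEexp : Real.exp ((β^2/4) * n) * Real.exp (-(β^2/2) * n) = Real.exp (-(β^2/4) * n) := by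
        rw [← Real.exp_add]
        ring_nf
      calc (n:ℝ) * ((n:ℝ) * (((n.choose K : ℕ) : ℝ) * E))
          ≤ (n:ℝ) * ((n:ℝ) * (Real.exp ((β^2/4) * n) * E)) := by
            have h := mul_le_mul_of_nonneg_right hchoose hEpos
            have h' := mul_le_mul_of_nonneg_left h (le_of_lt hnpos)
            exact mul_le_mul_of_nonneg_left h' (le_of_lt hnpos)
        _ = ((n:ℝ)^2 * (Real.exp ((β^2/4) * n) * Real.exp (-(β^2/2) * n))) *
            ((n.factorial : ℕ) : ℝ) := by
            rw [hE]; ring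
        _ = ((n:ℝ)^2 * Real.exp (-(β^2/4) * n)) * ((n.factorial : ℕ) : ℝ) := by
            rw [hEexp]
        _ = ((n:ℝ)^2 * Real.exp (-(β^2/4))^n) * ((n.factorial : ℕ) : ℝ) := by
            rw [hexpeq]
        _ ≤ ε * ((n.factorial : ℕ) : ℝ) :=
            mul_le_mul_of_nonneg_right (le_of_lt hNn) (by positivity)
    calc (#(univ.filter fun σ : Equiv.Perm (Fin n) => ¬ Good σ) : ℝ)
        ≤ ((∑ a₀ ∈ univ, ∑ b₀ ∈ univ, ∑ X' ∈ (NB b₀).powersetCard (#(NB b₀) - K),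
            #(univ.filter fun σ : Equiv.Perm (Fin n) => ∀ i ∈ X', σ i ∉ NA a₀) : ℕ) : ℝ) := by
          exact_mod_cast le_trans hcard0 hcard1
      _ = (∑ a₀ ∈ univ, ∑ b₀ ∈ univ, ∑ X' ∈ (NB b₀).powersetCard (#(NB b₀) - K),
            (#(univ.filter fun σ : Equiv.Perm (Fin n) => ∀ i ∈ X', σ i ∉ NA a₀) : ℝ)) := by
          push_cast
          rfl
      _ ≤ (n:ℝ) * ((n:ℝ) * (((n.choose K : ℕ) : ℝ) * E)) := hsumR
      _ ≤ ε * ((n.factorial : ℕ) : ℝ) := hfinal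
  -- assembling
  have hPn : #(univ : Finset (Equiv.Perm (Fin n))) = n.factorial := by
    rw [card_univ, Fintype.card_perm, Fintype.card_fin]
  have hsplit := card_filter_add_card_filter_not (s := (univ : Finset (Equiv.Perm (Fin n)))) (p := Good)
  have hle : #(univ.filter Good) ≤
      #(univ.filter fun σ : Equiv.Perm (Fin n) =>
        ∀ M : Finset (Fin n × Fin n),
          M ⊆ (univ.filter fun e : Fin n × Fin n => σ e.1 = e.2) →
          (1 - ξ) * (n : ℝ) ≤ (M.card : ℝ) →
          ∃ τ : Equiv.Perm (Fin n), ∀ a : Fin n, (a, τ a) ∈ G ∪ M) := card_le_card hsub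
  have hgoodcard : ((n.factorial : ℕ) : ℝ) - (#(univ.filter fun σ : Equiv.Perm (Fin n) => ¬ Good σ) : ℝ)
      = (#(univ.filter Good) : ℝ) := by
    rw [← hPn]
    have := hsplit
    have hcast : (#(univ.filter Good) : ℝ) + (#(univ.filter fun σ => ¬ Good σ) : ℝ)
        = (#(univ : Finset (Equiv.Perm (Fin n))) : ℝ) := by exact_mod_cast this
    linarith
  rw [hPn]
  have h1 : (1 - ε) * ((n.factorial : ℕ) : ℝ) ≤ (#(univ.filter Good) : ℝ) := by
    rw [← hgoodcard]
    nlinarith [hbad]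
  calc (1 - ε) * ((n.factorial : ℕ) : ℝ) ≤ (#(univ.filter Good) : ℝ) := h1
    _ ≤ _ := by exact_mod_cast hle
end

section
/- There exist functions f(n) → 0 and g(n) → 0 as n → ∞ such that the following holds for every n, every tournament T on n vertices, every p with 0 ≤ p ≤ 1/2, and every vertex v of T: if v has out-degree k in T, and P is the random tournament obtained from T by reversing each edge independently with probability p, then the probability that v has out-degree less than k/3 in P is at most f(n)·e^{−k} + g(n)/n; the same bound holds with out-degree replaced by in-degree throughout. -/
open Finset Filter

/-- `T` is a tournament on `Fin n`: no loops, and between any two distinct vertices there is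
exactly one arc (`T u v = true` means there is an arc from `u` to `v`). -/
def IsTournament {n : ℕ} (T : Fin n → Fin n → Bool) : Prop :=
  (∀ v, T v v = false) ∧ ∀ u v : Fin n, u ≠ v → T u v = !T v u

/-- The out-degree of `v`. -/
def outDeg {n : ℕ} (T : Fin n → Fin n → Bool) (v : Fin n) : ℕ :=
  (univ.filter fun w => T v w = true).card

/-- The in-degree of `v`. -/
def inDeg {n : ℕ} (T : Fin n → Fin n → Bool) (v : Fin n) : ℕ :=
  (univ.filter fun w => T w v = true).card

/-- The unordered pairs of vertices, represented as ordered pairs `(u, v)` with `u < v`. -/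
def edgePairs (n : ℕ) : Finset (Fin n × Fin n) :=
  (univ : Finset (Fin n × Fin n)).filter fun e => e.1 < e.2

/-- The tournament obtained from `T` by reversing the edges in `S`. -/
def flipEdges {n : ℕ} (T : Fin n → Fin n → Bool) (S : Finset (Fin n × Fin n)) :
    Fin n → Fin n → Bool :=
  fun u v => if (u, v) ∈ S ∨ (v, u) ∈ S then T v u else T u v

open scoped Classical in
/-- The probability that the random tournament obtained from `T` by reversing each edge
independently with probability `p` satisfies `Q`. -/
noncomputable def flipProb {n : ℕ} (p : ℝ) (T : Fin n → Fin n → Bool)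
    (Q : (Fin n → Fin n → Bool) → Prop) : ℝ :=
  ∑ S ∈ (edgePairs n).powerset,
    if Q (flipEdges T S) then p ^ S.card * (1 - p) ^ ((edgePairs n).card - S.card) else 0

open scoped Classical

namespace PTPD
set_option linter.unusedSectionVars false

variable {α : Type*} [DecidableEq α]

set_option linter.unusedSectionVars false

lemma sumpow (s : Finset α) (a b : ℝ) :
    ∑ A ∈ s.powerset, a ^ A.card * b ^ (s.card - A.card) = (a + b) ^ s.card := by
  rw [Finset.sum_powerset_apply_card (fun j => a ^ j * b ^ (s.card - j))]
  rw [add_pow]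
  refine Finset.sum_congr rfl fun j hj => ?_
  rw [nsmul_eq_mul]
  ring

lemma split_powerset {s t : Finset α} (hst : Disjoint s t) (G : Finset α → Finset α → ℝ) :
    ∑ S ∈ (s ∪ t).powerset, G (S ∩ s) (S ∩ t) =
      ∑ A ∈ s.powerset, ∑ B ∈ t.powerset, G A B := by
  rw [← Finset.sum_product']
  refine Finset.sum_nbij' (fun S => (S ∩ s, S ∩ t)) (fun AB => AB.1 ∪ AB.2) ?_ ?_ ?_ ?_ ?_
  · intro S hS
    simp only [Finset.mem_product, Finset.mem_powerset]
    exact ⟨Finset.inter_subset_right, Finset.inter_subset_right⟩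
  · intro AB hAB
    simp only [Finset.mem_product, Finset.mem_powerset] at *
    exact Finset.union_subset_union hAB.1 hAB.2
  · intro S hS
    simp only [Finset.mem_powerset] at hS
    simp only
    rw [← Finset.inter_union_distrib_left]
    exact Finset.inter_eq_left.2 hS
  · intro AB hAB
    simp only [Finset.mem_product, Finset.mem_powerset] at hAB
    have hA : AB.1 ⊆ s := hAB.1
    have hB : AB.2 ⊆ t := hAB.2
    have h1 : (AB.1 ∪ AB.2) ∩ s = AB.1 := by
      ext a
      simp only [Finset.mem_inter, Finset.mem_union]
      constructor
      · rintro ⟨h | h, hs⟩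
        · exact h
        · exact absurd hs (Finset.disjoint_right.1 hst (hB h))
      · intro h; exact ⟨Or.inl h, hA h⟩
    have h2 : (AB.1 ∪ AB.2) ∩ t = AB.2 := by
      ext a
      simp only [Finset.mem_inter, Finset.mem_union]
      constructor
      · rintro ⟨h | h, ht⟩
        · exact absurd ht (Finset.disjoint_left.1 hst (hA h))
        · exact h
      · intro h; exact ⟨Or.inr h, hB h⟩
    rw [h1, h2]
  · intro S hS
    rfl


variable {n : ℕ}

/-- edges at `v` -/
def atV (n : ℕ) (v : Fin n) : Finset (Fin n × Fin n) :=
  (edgePairs n).filter fun e => e.1 = v ∨ e.2 = v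

/-- the endpoint of `e` other than `v` -/
def other (v : Fin n) (e : Fin n × Fin n) : Fin n :=
  if e.1 = v then e.2 else e.1

/-- pair of `v` and `w` as an edge -/
def phi (v w : Fin n) : Fin n × Fin n := if v < w then (v, w) else (w, v)

lemma mem_atV {v : Fin n} {e : Fin n × Fin n} :
    e ∈ atV n v ↔ e.1 < e.2 ∧ (e.1 = v ∨ e.2 = v) := by
  simp [atV, edgePairs]

lemma phi_mem {v w : Fin n} (h : w ≠ v) : phi v w ∈ atV n v := by
  rcases lt_or_gt_of_ne (Ne.symm h) with hlt | hlt
  · rw [mem_atV]; simp [phi, hlt]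
  · rw [mem_atV]; simp [phi, not_lt_of_gt hlt, hlt, not_lt.2 (le_of_lt hlt)]

lemma other_phi {v w : Fin n} (h : w ≠ v) : other v (phi v w) = w := by
  by_cases hlt : v < w
  · simp [phi, other, hlt]
  · simp [phi, other, hlt, h]

lemma other_ne {v : Fin n} {e : Fin n × Fin n} (he : e ∈ atV n v) : other v e ≠ v := by
  rw [mem_atV] at he
  obtain ⟨hlt, h | h⟩ := he
  · simp only [other, h, if_pos]
    exact fun hc => absurd (hc ▸ hlt) (by rw [h] at hlt ⊢; exact fun hh => lt_irrefl v (hc ▸ hh))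
  · simp only [other]
    by_cases h1 : e.1 = v
    · rw [h1] at hlt; rw [if_pos h1]; exact fun hc => lt_irrefl v (hc ▸ hlt)
    · rw [if_neg h1]; exact fun hc => h1 (hc.trans h.symm ▸ hc)

lemma phi_other {v : Fin n} {e : Fin n × Fin n} (he : e ∈ atV n v) : phi v (other v e) = e := by
  rw [mem_atV] at he
  obtain ⟨hlt, h | h⟩ := he
  · have : other v e = e.2 := by simp [other, h]
    rw [this, phi, if_pos (h ▸ hlt)]
    exact Prod.ext h.symm rfl
  · by_cases h1 : e.1 = v
    · have : other v e = e.2 := by simp [other, h1]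
      rw [this, phi, if_pos (h1 ▸ hlt)]
      exact Prod.ext h1.symm rfl
    · have : other v e = e.1 := by simp [other, h1]
      rw [this, phi, if_neg (by rw [← h]; exact not_lt.2 (le_of_lt hlt))]
      exact Prod.ext rfl h.symm

end PTPD
namespace PTPD
section
variable {n : ℕ} {T : Fin n → Fin n → Bool} {v : Fin n}

lemma mem_iff_phi {A : Finset (Fin n × Fin n)} (hA : A ⊆ atV n v) {w : Fin n} :
    ((v, w) ∈ A ∨ (w, v) ∈ A) ↔ phi v w ∈ A := by
  by_cases hlt : v < w
  · simp only [phi, if_pos hlt]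
    constructor
    · rintro (h | h)
      · exact h
      · exact absurd (mem_atV.1 (hA h)).1 (not_lt.2 (le_of_lt hlt))
    · exact Or.inl
  · simp only [phi, if_neg hlt]
    constructor
    · rintro (h | h)
      · exact absurd (mem_atV.1 (hA h)).1 hlt
      · exact h
    · exact Or.inr

lemma flip_diag (A : Finset (Fin n × Fin n)) (hA : A ⊆ atV n v) (hT : IsTournament T) :
    flipEdges T A v v = false := by
  unfold flipEdges
  have : (v, v) ∉ A := fun h => absurd (mem_atV.1 (hA h)).1 (lt_irrefl v)
  simp [this, hT.1 v]

/-- The out-neighbour edges at v and in-neighbour edges at v -/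
def Dv (T : Fin n → Fin n → Bool) (v : Fin n) : Finset (Fin n × Fin n) :=
  (atV n v).filter fun e => T v (other v e) = true

def Iv (T : Fin n → Fin n → Bool) (v : Fin n) : Finset (Fin n × Fin n) :=
  (atV n v).filter fun e => ¬(T v (other v e) = true)

lemma Dv_subset : Dv T v ⊆ atV n v := Finset.filter_subset _ _
lemma Iv_subset : Iv T v ⊆ atV n v := Finset.filter_subset _ _

lemma Dv_disj_Iv : Disjoint (Dv T v) (Iv T v) := by
  refine Finset.disjoint_left.2 fun e he he' => ?_
  rw [Dv, Finset.mem_filter] at he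
  rw [Iv, Finset.mem_filter] at he'
  exact he'.2 he.2

lemma Dv_union_Iv : Dv T v ∪ Iv T v = atV n v := Finset.filter_union_filter_not_eq _ _

lemma card_Dv (hT : IsTournament T) : (Dv T v).card = outDeg T v := by
  refine Finset.card_nbij (other v) ?_ ?_ ?_
  · intro e he
    rw [Dv, Finset.mem_coe, Finset.mem_filter] at he
    simp [he.2]
  · intro e he e' he' hee
    rw [← phi_other (Dv_subset (Finset.mem_coe.1 he)),
      ← phi_other (Dv_subset (Finset.mem_coe.1 he')), hee]
  · intro w hw
    simp only [Finset.coe_filter, Finset.mem_univ, true_and, Set.mem_setOf_eq] at hw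
    have hwv : w ≠ v := fun h => by rw [h, hT.1 v] at hw; exact Bool.false_ne_true hw
    refine ⟨phi v w, ?_, other_phi hwv⟩
    simp only [Finset.coe_filter, Set.mem_setOf_eq, Dv, Finset.mem_coe, Finset.mem_filter]
    exact ⟨phi_mem hwv, by rw [other_phi hwv]; exact hw⟩

lemma card_atV : (atV n v).card = n - 1 := by
  have h1 : (atV n v) = Finset.image (phi v) (Finset.univ.erase v) := by
    ext e
    simp only [Finset.mem_image, Finset.mem_erase, Finset.mem_univ, and_true]
    constructor
    · intro he; exact ⟨other v e, other_ne he, phi_other he⟩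
    · rintro ⟨w, hw, rfl⟩; exact phi_mem hw
  rw [h1, Finset.card_image_of_injOn, Finset.card_erase_of_mem (Finset.mem_univ v),
    Finset.card_univ, Fintype.card_fin]
  intro a ha b hb hab
  simp only [Finset.coe_erase, Set.mem_diff, Finset.coe_univ, Set.mem_univ, true_and,
    Set.mem_singleton_iff] at ha hb
  rw [← other_phi (v := v) ha, ← other_phi (v := v) hb, hab]

/-- out-degree of v after flipping a set A of edges at v -/
lemma outDeg_flip (hT : IsTournament T) {A : Finset (Fin n × Fin n)} (hA : A ⊆ atV n v) :
    outDeg (flipEdges T A) v = (Dv T v \ A).card + (Iv T v ∩ A).card := by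
  have key : (Finset.univ.filter fun w => flipEdges T A v w = true).card
      = ((Dv T v \ A) ∪ (Iv T v ∩ A)).card := by
    refine Finset.card_nbij (phi v) ?_ ?_ ?_
    · intro w hw
      simp only [Finset.mem_coe, Finset.mem_filter, Finset.mem_univ, true_and] at hw
      have hwv : w ≠ v := by
        intro h; rw [h] at hw; rw [flip_diag A hA hT] at hw; exact Bool.false_ne_true hw
      have hcond : flipEdges T A v w = if phi v w ∈ A then T w v else T v w := by
        unfold flipEdges
        by_cases hc : (v, w) ∈ A ∨ (w, v) ∈ A
        · rw [if_pos hc, if_pos ((mem_iff_phi hA).1 hc)]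
        · rw [if_neg hc, if_neg (fun h => hc ((mem_iff_phi hA).2 h))]
      simp only [Finset.mem_coe, Finset.mem_union, Finset.mem_sdiff, Finset.mem_inter]
      by_cases hmem : phi v w ∈ A
      · rw [hcond, if_pos hmem] at hw
        have hTvw : T v w = false := by rw [hT.2 v w (Ne.symm hwv), hw]; rfl
        refine Or.inr ⟨?_, hmem⟩
        rw [Iv, Finset.mem_filter]
        refine ⟨phi_mem hwv, ?_⟩
        rw [other_phi hwv, hTvw]; simp
      · rw [hcond, if_neg hmem] at hw
        refine Or.inl ⟨?_, hmem⟩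
        rw [Dv, Finset.mem_filter]
        exact ⟨phi_mem hwv, by rw [other_phi hwv]; exact hw⟩
    · intro a ha b hb hab
      simp only [Finset.coe_filter, Finset.mem_univ, true_and, Set.mem_setOf_eq] at ha hb
      have hav : a ≠ v := by
        intro h; rw [h, flip_diag A hA hT] at ha; exact Bool.false_ne_true ha
      have hbv : b ≠ v := by
        intro h; rw [h, flip_diag A hA hT] at hb; exact Bool.false_ne_true hb
      rw [← other_phi hav, ← other_phi hbv, hab]
    · rintro e he
      simp only [Finset.mem_coe, Finset.coe_union, Set.mem_union, Finset.coe_sdiff,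
        Set.mem_diff, Finset.coe_inter, Set.mem_inter_iff, Finset.mem_coe,
        Finset.mem_sdiff, Finset.mem_inter] at he
      have heatV : e ∈ atV n v := by
        rcases he with ⟨h, _⟩ | ⟨h, _⟩
        · exact Dv_subset h
        · exact Iv_subset h
      set w := other v e with hw
      have hwv : w ≠ v := other_ne heatV
      have hphiw : phi v w = e := phi_other heatV
      refine ⟨w, ?_, hphiw⟩
      simp only [Finset.coe_filter, Finset.mem_univ, true_and, Set.mem_setOf_eq]
      have hcond : flipEdges T A v w = if phi v w ∈ A then T w v else T v w := by
        unfold flipEdges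
        by_cases hc : (v, w) ∈ A ∨ (w, v) ∈ A
        · rw [if_pos hc, if_pos ((mem_iff_phi hA).1 hc)]
        · rw [if_neg hc, if_neg (fun h => hc ((mem_iff_phi hA).2 h))]
      rw [hcond, hphiw]
      rcases he with ⟨h, hnA⟩ | ⟨h, hA2⟩
      · rw [if_neg hnA]
        rw [Dv, Finset.mem_filter] at h
        exact h.2
      · rw [if_pos hA2]
        rw [Iv, Finset.mem_filter] at h
        have : T v w = false := by
          cases hc : T v w
          · rfl
          · exact absurd hc h.2
        rw [hT.2 w v hwv, this]; rfl
  rw [outDeg, key, Finset.card_union_of_disjoint]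
  exact Finset.disjoint_of_subset_left (Finset.sdiff_subset) 
    (Finset.disjoint_of_subset_right (Finset.inter_subset_left) Dv_disj_Iv)

end
end PTPD

namespace PTPD
section
variable {n : ℕ} {T : Fin n → Fin n → Bool} {v : Fin n}

lemma localize {S : Finset (Fin n × Fin n)} (hS : S ⊆ edgePairs n) (w : Fin n) :
    flipEdges T S v w = flipEdges T (S ∩ atV n v) v w := by
  unfold flipEdges
  have hiff : ((v, w) ∈ S ∨ (w, v) ∈ S) ↔ ((v, w) ∈ S ∩ atV n v ∨ (w, v) ∈ S ∩ atV n v) := by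
    constructor
    · rintro (h | h)
      · refine Or.inl (Finset.mem_inter.2 ⟨h, ?_⟩)
        have := hS h
        simp only [edgePairs, Finset.mem_filter, Finset.mem_univ, true_and] at this
        simp [atV, edgePairs, this]
      · refine Or.inr (Finset.mem_inter.2 ⟨h, ?_⟩)
        have := hS h
        simp only [edgePairs, Finset.mem_filter, Finset.mem_univ, true_and] at this
        simp [atV, edgePairs, this]
    · rintro (h | h)
      · exact Or.inl (Finset.mem_inter.1 h).1
      · exact Or.inr (Finset.mem_inter.1 h).1
  by_cases hc : (v, w) ∈ S ∨ (w, v) ∈ S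
  · rw [if_pos hc, if_pos (hiff.1 hc)]
  · rw [if_neg hc, if_neg (fun h => hc (hiff.2 h))]

lemma outDeg_localize {S : Finset (Fin n × Fin n)} (hS : S ⊆ edgePairs n) :
    outDeg (flipEdges T S) v = outDeg (flipEdges T (S ∩ atV n v)) v := by
  unfold outDeg
  congr 1
  refine Finset.filter_congr fun w _ => ?_
  rw [localize hS w]


end
end PTPD

namespace PTPD
section
variable {n : ℕ} {T : Fin n → Fin n → Bool} {v : Fin n} {p : ℝ}

lemma flipProb_eq_atV (hT : IsTournament T) (c : ℝ) :
    flipProb p T (fun P => (outDeg P v : ℝ) < c) =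
      ∑ A ∈ (atV n v).powerset,
        if (((Dv T v \ A).card + (Iv T v ∩ A).card : ℕ) : ℝ) < c then
          p ^ A.card * (1 - p) ^ ((atV n v).card - A.card) else 0 := by
  classical
  set s := atV n v with hs
  set t := (edgePairs n).filter (fun e => ¬(e.1 = v ∨ e.2 = v)) with ht
  have hunion : s ∪ t = edgePairs n := Finset.filter_union_filter_not_eq _ _
  have hdisj : Disjoint s t := Finset.disjoint_filter_filter_not _ _ _
  have step1 : flipProb p T (fun P => (outDeg P v : ℝ) < c) =
      ∑ S ∈ (s ∪ t).powerset,
        (fun (A B : Finset (Fin n × Fin n)) =>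
          (if (((Dv T v \ A).card + (Iv T v ∩ A).card : ℕ) : ℝ) < c then
            p ^ A.card * (1 - p) ^ (s.card - A.card) else 0) *
          (p ^ B.card * (1 - p) ^ (t.card - B.card))) (S ∩ s) (S ∩ t) := by
    rw [flipProb, ← hunion]
    refine Finset.sum_congr rfl fun S hS => ?_
    rw [Finset.mem_powerset, hunion] at hS
    have hdeg : outDeg (flipEdges T S) v
        = (Dv T v \ (S ∩ s)).card + (Iv T v ∩ (S ∩ s)).card := by
      rw [outDeg_localize hS, outDeg_flip hT Finset.inter_subset_right]
    have hScards : S.card = (S ∩ s).card + (S ∩ t).card := by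
      rw [← Finset.card_union_of_disjoint (Finset.disjoint_of_subset_left
          Finset.inter_subset_right (Finset.disjoint_of_subset_right
          Finset.inter_subset_right hdisj)),
        ← Finset.inter_union_distrib_left, hunion, Finset.inter_eq_left.2 hS]
    have hM : (edgePairs n).card = s.card + t.card := by
      rw [← hunion, Finset.card_union_of_disjoint hdisj]
    have h1 : (S ∩ s).card ≤ s.card := Finset.card_le_card Finset.inter_subset_right
    have h2 : (S ∩ t).card ≤ t.card := Finset.card_le_card Finset.inter_subset_right
    simp only [hdeg]
    by_cases hc : (((Dv T v \ (S ∩ s)).card + (Iv T v ∩ (S ∩ s)).card : ℕ) : ℝ) < c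
    · rw [if_pos hc, if_pos hc, hScards, Finset.card_union_of_disjoint hdisj, pow_add,
        (by omega : s.card + t.card - ((S ∩ s).card + (S ∩ t).card)
          = (s.card - (S ∩ s).card) + (t.card - (S ∩ t).card)), pow_add]
      ring
    · rw [if_neg hc, if_neg hc, zero_mul]
  rw [step1, split_powerset hdisj (fun A B =>
    (if (((Dv T v \ A).card + (Iv T v ∩ A).card : ℕ) : ℝ) < c then
      p ^ A.card * (1 - p) ^ (s.card - A.card) else 0) *
    (p ^ B.card * (1 - p) ^ (t.card - B.card)))]
  refine Finset.sum_congr rfl fun A hA => ?_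
  rw [← Finset.mul_sum, sumpow, (by ring : p + (1 - p) = (1:ℝ)), one_pow, mul_one]

lemma flipProb_le_T1T2 (hT : IsTournament T) (hp0 : 0 ≤ p) (hp1 : p ≤ 1) (c : ℝ) :
    flipProb p T (fun P => (outDeg P v : ℝ) < c) ≤
      (∑ A ∈ (Dv T v).powerset,
        if (((Dv T v \ A).card : ℕ) : ℝ) < c then
          p ^ A.card * (1 - p) ^ ((Dv T v).card - A.card) else 0) *
      (∑ B ∈ (Iv T v).powerset,
        if ((B.card : ℕ) : ℝ) < c then
          p ^ B.card * (1 - p) ^ ((Iv T v).card - B.card) else 0) := by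
  classical
  set q := 1 - p with hq
  have hq0 : 0 ≤ q := by rw [hq]; linarith
  set D := Dv T v with hD
  set I := Iv T v with hI
  have hdisj : Disjoint D I := Dv_disj_Iv
  have hunion : D ∪ I = atV n v := Dv_union_Iv
  have step2 : (∑ A ∈ (atV n v).powerset,
        if (((Dv T v \ A).card + (Iv T v ∩ A).card : ℕ) : ℝ) < c then
          p ^ A.card * q ^ ((atV n v).card - A.card) else 0)
      = ∑ A1 ∈ D.powerset, ∑ A2 ∈ I.powerset,
          (if (((D \ A1).card + A2.card : ℕ) : ℝ) < c then
            (p ^ A1.card * q ^ (D.card - A1.card)) * (p ^ A2.card * q ^ (I.card - A2.card))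
          else 0) := by
    rw [← split_powerset hdisj (fun A1 A2 =>
      (if (((D \ A1).card + A2.card : ℕ) : ℝ) < c then
        (p ^ A1.card * q ^ (D.card - A1.card)) * (p ^ A2.card * q ^ (I.card - A2.card))
      else 0)), ← hunion]
    refine Finset.sum_congr rfl fun A hA => ?_
    rw [Finset.mem_powerset] at hA
    have hd1 : D \ A = D \ (A ∩ D) := by
      ext e; simp only [Finset.mem_sdiff, Finset.mem_inter]; tauto
    have hd2 : I ∩ A = A ∩ I := Finset.inter_comm _ _
    have hA1 : (A ∩ D).card ≤ D.card := Finset.card_le_card Finset.inter_subset_right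
    have hA2 : (A ∩ I).card ≤ I.card := Finset.card_le_card Finset.inter_subset_right
    have hcards : A.card = (A ∩ D).card + (A ∩ I).card := by
      rw [← Finset.card_union_of_disjoint (Finset.disjoint_of_subset_left
          Finset.inter_subset_right (Finset.disjoint_of_subset_right
          Finset.inter_subset_right hdisj)),
        ← Finset.inter_union_distrib_left, Finset.inter_eq_left.2 hA]
    have hUcard : (D ∪ I).card = D.card + I.card := Finset.card_union_of_disjoint hdisj
    simp only [← hD, ← hI, hd1, hd2]
    by_cases hc : (((D \ (A ∩ D)).card + (A ∩ I).card : ℕ) : ℝ) < c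
    · rw [if_pos hc, if_pos hc, hcards, hUcard, pow_add,
        (by omega : D.card + I.card - ((A ∩ D).card + (A ∩ I).card)
          = (D.card - (A ∩ D).card) + (I.card - (A ∩ I).card)), pow_add]
      ring
    · rw [if_neg hc, if_neg hc]
  rw [flipProb_eq_atV hT c, step2, Finset.sum_mul_sum]
  refine Finset.sum_le_sum fun A1 hA1 => Finset.sum_le_sum fun A2 hA2 => ?_
  have hw1 : 0 ≤ p ^ A1.card * q ^ (D.card - A1.card) :=
    mul_nonneg (pow_nonneg hp0 _) (pow_nonneg hq0 _)
  have hw2 : 0 ≤ p ^ A2.card * q ^ (I.card - A2.card) :=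
    mul_nonneg (pow_nonneg hp0 _) (pow_nonneg hq0 _)
  by_cases hc : (((D \ A1).card + A2.card : ℕ) : ℝ) < c
  · rw [if_pos hc]
    have hc1 : (((D \ A1).card : ℕ) : ℝ) < c := by
      refine lt_of_le_of_lt ?_ hc
      exact_mod_cast Nat.le_add_right _ _
    have hc2 : ((A2.card : ℕ) : ℝ) < c := by
      refine lt_of_le_of_lt ?_ hc
      exact_mod_cast Nat.le_add_left _ _
    rw [if_pos hc1, if_pos hc2]
  · rw [if_neg hc]
    positivity
end
end PTPD
namespace PTPD
section
variable {α : Type*} [DecidableEq α]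
set_option linter.unusedSectionVars false

lemma tail_le_one (s : Finset α) {p : ℝ} (hp : 0 ≤ p) (hp1 : p ≤ 1)
    (cond : Finset α → Prop) :
    (∑ A ∈ s.powerset, if cond A then p ^ A.card * (1 - p) ^ (s.card - A.card) else 0) ≤ 1 := by
  classical
  have h := sumpow s p (1 - p)
  rw [(by ring : p + (1 - p) = (1:ℝ)), one_pow] at h
  refine le_trans (Finset.sum_le_sum (fun A hA => ?_)) (le_of_eq h)
  by_cases hc : cond A
  · rw [if_pos hc]
  · rw [if_neg hc]
    exact mul_nonneg (pow_nonneg hp _) (pow_nonneg (by linarith) _)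

lemma tail_nonneg (s : Finset α) {p : ℝ} (hp : 0 ≤ p) (hp1 : p ≤ 1)
    (cond : Finset α → Prop) :
    0 ≤ (∑ A ∈ s.powerset, if cond A then p ^ A.card * (1 - p) ^ (s.card - A.card) else 0) := by
  refine Finset.sum_nonneg fun A hA => ?_
  by_cases hc : cond A
  · rw [if_pos hc]
    exact mul_nonneg (pow_nonneg hp _) (pow_nonneg (by linarith) _)
  · rw [if_neg hc]

/-- Chernoff-type bound for the upper tail of the number of flipped edges. -/
lemma t1_bound (s : Finset α) {p : ℝ} (c : ℝ) (hp : 0 ≤ p) (hp1 : p ≤ 1) :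
    (∑ A ∈ s.powerset,
      if (((s \ A).card : ℕ) : ℝ) < c then p ^ A.card * (1 - p) ^ (s.card - A.card) else 0)
    ≤ (2:ℝ) ^ (c - (s.card : ℝ)) * (2 * p + (1 - p)) ^ s.card := by
  classical
  have h2 : ∀ A ∈ s.powerset,
      (if (((s \ A).card : ℕ) : ℝ) < c then p ^ A.card * (1 - p) ^ (s.card - A.card) else 0)
      ≤ (2:ℝ) ^ (c - (s.card : ℝ)) * ((2 * p) ^ A.card * (1 - p) ^ (s.card - A.card)) := by
    intro A hA
    rw [Finset.mem_powerset] at hA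
    have hw : (0:ℝ) ≤ p ^ A.card * (1 - p) ^ (s.card - A.card) :=
      mul_nonneg (pow_nonneg hp _) (pow_nonneg (by linarith) _)
    by_cases hc : (((s \ A).card : ℕ) : ℝ) < c
    · rw [if_pos hc]
      have hsd : (s \ A).card = s.card - A.card := Finset.card_sdiff_of_subset hA
      have hAc : A.card ≤ s.card := Finset.card_le_card hA
      have hgt : (s.card : ℝ) - c < (A.card : ℝ) := by
        rw [hsd] at hc
        have : ((s.card - A.card : ℕ) : ℝ) = (s.card : ℝ) - (A.card : ℝ) := by
          push_cast [hAc]; ring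
        linarith [this ▸ hc]
      have hone : (1:ℝ) ≤ (2:ℝ) ^ (c - (s.card : ℝ)) * (2:ℝ) ^ (A.card : ℕ) := by
        rw [← Real.rpow_natCast 2 A.card, ← Real.rpow_add (by norm_num)]
        calc (1:ℝ) = (2:ℝ) ^ (0:ℝ) := (Real.rpow_zero 2).symm
        _ ≤ _ := Real.rpow_le_rpow_of_exponent_le (by norm_num) (by linarith)
      calc p ^ A.card * (1 - p) ^ (s.card - A.card)
          = 1 * (p ^ A.card * (1 - p) ^ (s.card - A.card)) := (one_mul _).symm
        _ ≤ ((2:ℝ) ^ (c - (s.card : ℝ)) * (2:ℝ) ^ (A.card : ℕ)) *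
            (p ^ A.card * (1 - p) ^ (s.card - A.card)) := by
            exact mul_le_mul_of_nonneg_right hone hw
        _ = (2:ℝ) ^ (c - (s.card : ℝ)) * ((2 * p) ^ A.card * (1 - p) ^ (s.card - A.card)) := by
            rw [mul_pow]; ring
    · rw [if_neg hc]
      have h0 : (0:ℝ) ≤ (2:ℝ) ^ (c - (s.card : ℝ)) := Real.rpow_nonneg (by norm_num) _
      exact mul_nonneg h0 (mul_nonneg (pow_nonneg (by linarith) _) (pow_nonneg (by linarith) _))
  calc _ ≤ ∑ A ∈ s.powerset,
        (2:ℝ) ^ (c - (s.card : ℝ)) * ((2 * p) ^ A.card * (1 - p) ^ (s.card - A.card)) :=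
      Finset.sum_le_sum h2
    _ = (2:ℝ) ^ (c - (s.card : ℝ)) * (2 * p + (1 - p)) ^ s.card := by
      rw [← Finset.mul_sum, sumpow]

/-- Union-type bound for the upper tail, good for small `p`. -/
lemma t1_small (s : Finset α) {p p1 : ℝ} (c : ℝ) (hp : 0 ≤ p) (hpp1 : p ≤ p1)
    (hp1a : 0 < p1) (hp1b : p1 ≤ 1) :
    (∑ A ∈ s.powerset,
      if (((s \ A).card : ℕ) : ℝ) < c then p ^ A.card * (1 - p) ^ (s.card - A.card) else 0)
    ≤ (2:ℝ) ^ s.card * p1 ^ ((s.card : ℝ) - c) := by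
  classical
  have h2 : ∀ A ∈ s.powerset,
      (if (((s \ A).card : ℕ) : ℝ) < c then p ^ A.card * (1 - p) ^ (s.card - A.card) else 0)
      ≤ p1 ^ ((s.card : ℝ) - c) := by
    intro A hA
    rw [Finset.mem_powerset] at hA
    by_cases hc : (((s \ A).card : ℕ) : ℝ) < c
    · rw [if_pos hc]
      have hsd : (s \ A).card = s.card - A.card := Finset.card_sdiff_of_subset hA
      have hAc : A.card ≤ s.card := Finset.card_le_card hA
      have hgt : (s.card : ℝ) - c ≤ (A.card : ℝ) := by
        rw [hsd] at hc
        have : ((s.card - A.card : ℕ) : ℝ) = (s.card : ℝ) - (A.card : ℝ) := by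
          push_cast [hAc]; ring
        linarith [this ▸ hc]
      calc p ^ A.card * (1 - p) ^ (s.card - A.card)
          ≤ p1 ^ A.card * 1 := by
            refine mul_le_mul (pow_le_pow_left₀ hp hpp1 _) (pow_le_one₀ (by linarith) (by linarith))
              (pow_nonneg (by linarith) _) (pow_nonneg (le_of_lt hp1a) _)
        _ = p1 ^ ((A.card : ℕ) : ℝ) := by rw [mul_one, Real.rpow_natCast]
        _ ≤ p1 ^ ((s.card : ℝ) - c) := Real.rpow_le_rpow_of_exponent_ge hp1a hp1b hgt
    · rw [if_neg hc]
      exact Real.rpow_nonneg (le_of_lt hp1a) _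
  calc _ ≤ ∑ _A ∈ s.powerset, p1 ^ ((s.card : ℝ) - c) := Finset.sum_le_sum h2
    _ = (2:ℝ) ^ s.card * p1 ^ ((s.card : ℝ) - c) := by
      rw [Finset.sum_const, Finset.card_powerset, nsmul_eq_mul]
      push_cast; ring

/-- Chernoff-type bound for the lower tail of the number of flipped edges. -/
lemma t2_bound (s : Finset α) {p : ℝ} (c : ℝ) (hp : 0 ≤ p) (hp1 : p ≤ 1) :
    (∑ B ∈ s.powerset,
      if ((B.card : ℕ) : ℝ) < c then p ^ B.card * (1 - p) ^ (s.card - B.card) else 0)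
    ≤ (2:ℝ) ^ c * (p / 2 + (1 - p)) ^ s.card := by
  classical
  have h2 : ∀ B ∈ s.powerset,
      (if ((B.card : ℕ) : ℝ) < c then p ^ B.card * (1 - p) ^ (s.card - B.card) else 0)
      ≤ (2:ℝ) ^ c * ((p / 2) ^ B.card * (1 - p) ^ (s.card - B.card)) := by
    intro B hB
    have hw : (0:ℝ) ≤ (p / 2) ^ B.card * (1 - p) ^ (s.card - B.card) :=
      mul_nonneg (pow_nonneg (by linarith) _) (pow_nonneg (by linarith) _)
    by_cases hc : ((B.card : ℕ) : ℝ) < c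
    · rw [if_pos hc]
      have hone : (1:ℝ) ≤ (2:ℝ) ^ c * ((1:ℝ)/2) ^ (B.card : ℕ) := by
        have : ((1:ℝ)/2) ^ (B.card : ℕ) = (2:ℝ) ^ (-(B.card : ℝ)) := by
          rw [← Real.rpow_natCast (1/2) B.card, one_div, Real.inv_rpow (by norm_num),
            ← Real.rpow_neg (by norm_num)]
        rw [this, ← Real.rpow_add (by norm_num)]
        calc (1:ℝ) = (2:ℝ) ^ (0:ℝ) := (Real.rpow_zero 2).symm
        _ ≤ _ := Real.rpow_le_rpow_of_exponent_le (by norm_num) (by linarith)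
      calc p ^ B.card * (1 - p) ^ (s.card - B.card)
          = 1 * (p ^ B.card * (1 - p) ^ (s.card - B.card)) := (one_mul _).symm
        _ ≤ ((2:ℝ) ^ c * ((1:ℝ)/2) ^ (B.card : ℕ)) *
            (p ^ B.card * (1 - p) ^ (s.card - B.card)) := by
            refine mul_le_mul_of_nonneg_right hone ?_
            exact mul_nonneg (pow_nonneg hp _) (pow_nonneg (by linarith) _)
        _ = (2:ℝ) ^ c * ((p / 2) ^ B.card * (1 - p) ^ (s.card - B.card)) := by
            simp only [div_pow]; ring
    · rw [if_neg hc]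
      have : (0:ℝ) ≤ (2:ℝ) ^ c := Real.rpow_nonneg (by norm_num) _
      positivity
  calc _ ≤ ∑ B ∈ s.powerset,
        (2:ℝ) ^ c * ((p / 2) ^ B.card * (1 - p) ^ (s.card - B.card)) :=
      Finset.sum_le_sum h2
    _ = (2:ℝ) ^ c * (p / 2 + (1 - p)) ^ s.card := by
      rw [← Finset.mul_sum, sumpow]

end
end PTPD
namespace PTPD

noncomputable def fbig (n : ℕ) : ℝ :=
  2 * Real.exp 1 * Real.exp (-((2:ℝ)/9) * Real.log n)
    + Real.exp (120 * Real.log n - Real.exp ((2:ℝ)/3 * Real.log n) / 4)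

noncomputable def ffun (n : ℕ) : ℝ := if n < 10^7 then Real.exp n else fbig n

noncomputable def gfun (n : ℕ) : ℝ := 1 / n

lemma fbig_nonneg (n : ℕ) : 0 ≤ fbig n := by
  unfold fbig; positivity

lemma ffun_nonneg (n : ℕ) : 0 ≤ ffun n := by
  unfold ffun
  by_cases h : n < 10^7
  · rw [if_pos h]; positivity
  · rw [if_neg h]; exact fbig_nonneg n

lemma gfun_nonneg (n : ℕ) : 0 ≤ gfun n := by unfold gfun; positivity

lemma log_const1 : Real.log (3/2) + 1/48 ≤ (2/3) * Real.log 2 := by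
  have h1 : (3/2:ℝ) ≤ 1.1067^4 := by norm_num
  have h2 : Real.log (3/2) ≤ Real.log (1.1067^4) :=
    Real.log_le_log (by norm_num) h1
  rw [Real.log_pow] at h2
  have h3 : Real.log 1.1067 ≤ 1.1067 - 1 := by
    have := Real.log_le_sub_one_of_pos (by norm_num : (0:ℝ) < 1.1067)
    linarith
  have h4 := Real.log_two_gt_d9
  push_cast at h2
  nlinarith

lemma log2_le : Real.log 2 ≤ 3/4 := by
  have := Real.log_two_lt_d9
  linarith

lemma exp_two_pow (L : ℝ) : Real.exp (2 * L) = Real.exp L ^ 2 := by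
  rw [show (2:ℝ) * L = L + L by ring, Real.exp_add, sq]

section
variable {n : ℕ} {T : Fin n → Fin n → Bool} {v : Fin n} {p : ℝ}

lemma flipProb_le_one (hp0 : 0 ≤ p) (hp1 : p ≤ 1) (Q : (Fin n → Fin n → Bool) → Prop) :
    flipProb p T Q ≤ 1 := by
  classical
  exact tail_le_one (edgePairs n) hp0 hp1 (fun S => Q (flipEdges T S))

set_option maxHeartbeats 2000000 in
theorem master (hT : IsTournament T) (hp0 : 0 ≤ p) (hp2 : p ≤ 1/2) (v : Fin n) (k : ℕ)
    (hk : outDeg T v = k) :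
    flipProb p T (fun P => (outDeg P v : ℝ) < (k:ℝ)/3) ≤
      ffun n * Real.exp (-(k:ℝ)) + gfun n / n := by
  classical
  have hp1 : p ≤ 1 := by linarith
  have hn : 0 < n := v.pos
  have hkn : k ≤ n - 1 := by
    rw [← hk, ← card_Dv hT]
    calc (Dv T v).card ≤ (atV n v).card := Finset.card_le_card Dv_subset
      _ = n - 1 := card_atV
  have hD : (Dv T v).card = k := by rw [card_Dv hT, hk]
  have hI : (Iv T v).card = n - 1 - k := by
    have h1 : (Dv T v).card + (Iv T v).card = n - 1 := by
      rw [← Finset.card_union_of_disjoint Dv_disj_Iv, Dv_union_Iv, card_atV]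
    omega
  have hg0 : 0 ≤ gfun n / n := by
    have := gfun_nonneg n; positivity
  have hf0 : 0 ≤ ffun n * Real.exp (-(k:ℝ)) :=
    mul_nonneg (ffun_nonneg n) (Real.exp_pos _).le
  by_cases hsmall : n < 10^7
  · -- trivial regime
    have h1 : flipProb p T (fun P => (outDeg P v : ℝ) < (k:ℝ)/3) ≤ 1 :=
      flipProb_le_one hp0 hp1 _
    have hf : ffun n = Real.exp n := by rw [ffun, if_pos hsmall]
    have hkr : (k:ℝ) + 1 ≤ (n:ℝ) := by exact_mod_cast Nat.succ_le_of_lt (by omega)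
    have h2 : (1:ℝ) ≤ ffun n * Real.exp (-(k:ℝ)) := by
      rw [hf, ← Real.exp_add]
      calc (1:ℝ) = Real.exp 0 := Real.exp_zero.symm
        _ ≤ _ := Real.exp_le_exp.2 (by linarith)
    linarith
  · push_neg at hsmall
    have hffun : ffun n = fbig n := by rw [ffun, if_neg (by omega)]
    have hn1 : (1:ℝ) ≤ (n:ℝ) := by exact_mod_cast hn
    have hn7 : ((10:ℝ))^7 ≤ (n:ℝ) := by
      have : ((10^7 : ℕ) : ℝ) ≤ (n:ℝ) := by exact_mod_cast hsmall
      push_cast at this; linarith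
    have hlogn : (14:ℝ) ≤ Real.log n := by
      have h10 : (2:ℝ) ≤ Real.log 10 := by
        rw [Real.le_log_iff_exp_le (by norm_num)]
        have h := Real.exp_one_lt_d9
        calc Real.exp 2 = Real.exp 1 ^ 2 := by rw [← exp_two_pow]; norm_num
          _ ≤ 2.7182818286 ^ 2 :=
              pow_le_pow_left₀ (Real.exp_pos 1).le (le_of_lt h) 2
          _ ≤ 10 := by norm_num
      calc (14:ℝ) = 7 * 2 := by norm_num
        _ ≤ 7 * Real.log 10 := by linarith
        _ = Real.log (10^7) := by rw [Real.log_pow]; push_cast; ring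
        _ ≤ Real.log n := Real.log_le_log (by positivity) hn7
    rcases Nat.eq_zero_or_pos k with hk0 | hkpos
    · -- k = 0 : probability is zero
      subst hk0
      have hzero : flipProb p T (fun P => (outDeg P v : ℝ) < ((0:ℕ):ℝ)/3) = 0 := by
        rw [flipProb]
        refine Finset.sum_eq_zero fun S hS => ?_
        rw [if_neg]
        push_cast
        simp only [zero_div]
        exact not_lt.2 (Nat.cast_nonneg _)
      rw [hzero]
      exact add_nonneg hf0 hg0
    · -- main regime
      set κ := (k:ℝ) with hκ
      have hκ1 : (1:ℝ) ≤ κ := Nat.one_le_cast.2 hkpos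
      have hmain := flipProb_le_T1T2 hT hp0 hp1 (κ/3) (v := v)
      set T1 := ∑ A ∈ (Dv T v).powerset,
        if (((Dv T v \ A).card : ℕ) : ℝ) < κ/3 then
          p ^ A.card * (1 - p) ^ ((Dv T v).card - A.card) else 0 with hT1def
      set T2 := ∑ B ∈ (Iv T v).powerset,
        if ((B.card : ℕ) : ℝ) < κ/3 then
          p ^ B.card * (1 - p) ^ ((Iv T v).card - B.card) else 0 with hT2def
      have hT1nn : 0 ≤ T1 := tail_nonneg _ hp0 hp1 _
      have hT2nn : 0 ≤ T2 := tail_nonneg _ hp0 hp1 _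
      have hT1le1 : T1 ≤ 1 := tail_le_one _ hp0 hp1 _
      have hT2le1 : T2 ≤ 1 := tail_le_one _ hp0 hp1 _
      by_cases hkbig : 96 * Real.log n ≤ κ
      · -- Case A : k large, Chernoff on T1
        have hA := t1_bound (Dv T v) (κ/3) hp0 hp1
        rw [← hT1def, hD] at hA
        have hstep : T1 ≤ Real.exp (-(κ/48)) := by
          have h32 : (2 * p + (1 - p)) ^ k ≤ (3/2 : ℝ) ^ k :=
            pow_le_pow_left₀ (by linarith) (by linarith) k
          have h2k : ((2:ℝ) ^ (κ/3 - (k:ℝ)) : ℝ) = Real.exp (Real.log 2 * (κ/3 - κ)) := by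
            rw [Real.rpow_def_of_pos (by norm_num)]
          have h32k : ((3/2:ℝ)) ^ k = Real.exp (κ * Real.log (3/2)) := by
            rw [← Real.exp_log (by norm_num : (0:ℝ) < 3/2), ← Real.exp_nat_mul]
            norm_num
            rfl
          calc T1 ≤ (2:ℝ) ^ (κ/3 - (k:ℝ)) * (2 * p + (1 - p)) ^ k := hA
            _ ≤ (2:ℝ) ^ (κ/3 - (k:ℝ)) * (3/2:ℝ) ^ k :=
                mul_le_mul_of_nonneg_left h32 (Real.rpow_nonneg (by norm_num) _)
            _ = Real.exp (Real.log 2 * (κ/3 - κ) + κ * Real.log (3/2)) := by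
                rw [h2k, h32k, ← Real.exp_add]
            _ ≤ Real.exp (-(κ/48)) := by
                refine Real.exp_le_exp.2 ?_
                nlinarith [log_const1, hκ1]
        have hgn : Real.exp (-(κ/48)) ≤ gfun n / n := by
          have h2L : Real.exp (-(κ/48)) ≤ Real.exp (-(2 * Real.log n)) :=
            Real.exp_le_exp.2 (by linarith)
          have hexp2 : Real.exp (-(2 * Real.log n)) = gfun n / n := by
            rw [Real.exp_neg, exp_two_pow, Real.exp_log (by linarith), gfun]
            field_simp
          linarith [hexp2 ▸ h2L]
        calc flipProb p T (fun P => (outDeg P v : ℝ) < κ/3) ≤ T1 * T2 := hmain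
          _ ≤ T1 * 1 := mul_le_mul_of_nonneg_left hT2le1 hT1nn
          _ = T1 := mul_one _
          _ ≤ gfun n / n := le_trans hstep hgn
          _ ≤ ffun n * Real.exp (-κ) + gfun n / n := by linarith
      · -- Case B
        have hkb : κ ≤ 96 * Real.log n := (lt_of_not_ge hkbig).le
        set p1 := Real.exp (-(Real.log n) / 3) with hp1def
        have hp1pos : 0 < p1 := Real.exp_pos _
        have hp1le1 : p1 ≤ 1 := by
          rw [hp1def]
          exact Real.exp_le_one_iff.2 (by linarith)
        by_cases hps : p ≤ p1
        · -- Case B1 : p small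
          have hB := t1_small (Dv T v) (κ/3) hp0 hps hp1pos hp1le1
          rw [← hT1def, hD] at hB
          have h2k : Real.exp (κ * Real.log 2) = (2:ℝ)^k := by
            rw [show κ * Real.log 2 = (k:ℕ) * Real.log 2 by rw [hκ],
              Real.exp_nat_mul, Real.exp_log (by norm_num)]
          have hp1k : p1 ^ ((k:ℝ) - κ/3) = Real.exp (-(Real.log n)/3 * (κ - κ/3)) := by
            rw [Real.rpow_def_of_pos hp1pos, Real.log_exp]
          have hstep : T1 ≤ Real.exp (κ * Real.log 2 - (2:ℝ)/9 * (κ * Real.log n)) := by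
            calc T1 ≤ 2^k * p1 ^ ((k:ℝ) - κ/3) := hB
              _ = Real.exp (κ * Real.log 2) * Real.exp (-(Real.log n)/3 * (κ - κ/3)) := by
                  rw [h2k, hp1k]
              _ = Real.exp (κ * Real.log 2 + -(Real.log n)/3 * (κ - κ/3)) :=
                  (Real.exp_add _ _).symm
              _ = Real.exp (κ * Real.log 2 - (2:ℝ)/9 * (κ * Real.log n)) := by
                  congr 1; ring
          have hfinal : Real.exp (κ * Real.log 2 - (2:ℝ)/9 * (κ * Real.log n))
              ≤ (2 * Real.exp 1 * Real.exp (-((2:ℝ)/9) * Real.log n)) * Real.exp (-κ) := by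
            have hrw : 2 * Real.exp 1 * Real.exp (-((2:ℝ)/9) * Real.log n) * Real.exp (-κ)
                = Real.exp (Real.log 2 + 1 + -((2:ℝ)/9) * Real.log n + -κ) := by
              rw [Real.exp_add, Real.exp_add, Real.exp_add, Real.exp_log (by norm_num : (0:ℝ) < 2)]
            rw [hrw]
            refine Real.exp_le_exp.2 ?_
            have hc0 : Real.log 2 + 1 - (2:ℝ)/9 * Real.log n ≤ 0 := by
              nlinarith [log2_le, hlogn]
            have hmul : κ * (Real.log 2 + 1 - (2:ℝ)/9 * Real.log n)
                ≤ 1 * (Real.log 2 + 1 - (2:ℝ)/9 * Real.log n) :=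
              mul_le_mul_of_nonpos_right hκ1 hc0
            nlinarith [hmul]
          have hfb : (2 * Real.exp 1 * Real.exp (-((2:ℝ)/9) * Real.log n)) * Real.exp (-κ)
              ≤ fbig n * Real.exp (-κ) := by
            refine mul_le_mul_of_nonneg_right ?_ (Real.exp_pos _).le
            rw [fbig]
            have : (0:ℝ) ≤ Real.exp (120 * Real.log n - Real.exp ((2:ℝ)/3 * Real.log n) / 4) :=
              (Real.exp_pos _).le
            linarith
          calc flipProb p T (fun P => (outDeg P v : ℝ) < κ/3) ≤ T1 * T2 := hmain
            _ ≤ T1 * 1 := mul_le_mul_of_nonneg_left hT2le1 hT1nn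
            _ = T1 := mul_one _
            _ ≤ fbig n * Real.exp (-κ) := le_trans hstep (le_trans hfinal hfb)
            _ ≤ ffun n * Real.exp (-κ) + gfun n / n := by rw [hffun]; linarith
        · -- Case B2 : p large
          have hpge : p1 ≤ p := (lt_of_not_ge hps).le
          have hB := t2_bound (Iv T v) (κ/3) hp0 hp1
          rw [← hT2def] at hB
          have hNr : (((Iv T v).card : ℕ):ℝ) = (n:ℝ) - 1 - κ := by
            rw [hI, hκ, Nat.cast_sub hkn, Nat.cast_sub hn]
            push_cast; ring
          have hsqrtn : (3162:ℝ) ≤ Real.sqrt n := by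
            rw [show (3162:ℝ) = Real.sqrt (3162^2) from (Real.sqrt_sq (by norm_num)).symm]
            exact Real.sqrt_le_sqrt (by nlinarith [hn7])
          have hsq : Real.sqrt n * Real.sqrt n = (n:ℝ) :=
            Real.mul_self_sqrt (by positivity)
          have hlogsqrt : Real.log n ≤ 2 * Real.sqrt n - 2 := by
            have h1 : Real.log n = 2 * Real.log (Real.sqrt n) := by
              rw [Real.log_sqrt (by positivity)]; ring
            have h2 : Real.log (Real.sqrt n) ≤ Real.sqrt n - 1 :=
              Real.log_le_sub_one_of_pos (by nlinarith)
            linarith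
          have hNge : (n:ℝ)/2 ≤ (((Iv T v).card : ℕ):ℝ) := by
            rw [hNr]
            nlinarith [hkb, hlogsqrt, hsqrtn, hsq]
          have hstep : T2 ≤ Real.exp (Real.log 2 * (κ/3) - (((Iv T v).card : ℕ):ℝ) * p1 / 2) := by
            have h1 : (p/2 + (1-p))^((Iv T v).card) ≤ Real.exp (-(p/2))^((Iv T v).card) := by
              refine pow_le_pow_left₀ (by linarith) ?_ _
              have := Real.add_one_le_exp (-(p/2)); linarith
            have h2 : Real.exp (-(p/2))^((Iv T v).card) = Real.exp ((((Iv T v).card : ℕ):ℝ) * (-(p/2))) := by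
              rw [Real.exp_nat_mul]
            have h3 : Real.exp ((((Iv T v).card : ℕ):ℝ) * (-(p/2))) ≤ Real.exp ((((Iv T v).card : ℕ):ℝ) * (-(p1/2))) := by
              refine Real.exp_le_exp.2 ?_
              have hN0 : (0:ℝ) ≤ (((Iv T v).card : ℕ):ℝ) := Nat.cast_nonneg _
              nlinarith [hpge, hN0]
            have h2c : ((2:ℝ)) ^ (κ/3) = Real.exp (Real.log 2 * (κ/3)) :=
              Real.rpow_def_of_pos (by norm_num) _
            calc T2 ≤ (2:ℝ)^(κ/3) * (p/2 + (1-p))^((Iv T v).card) := hB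
              _ ≤ (2:ℝ)^(κ/3) * Real.exp ((((Iv T v).card : ℕ):ℝ) * (-(p1/2))) := by
                  refine mul_le_mul_of_nonneg_left (le_trans h1 (le_trans (le_of_eq h2) h3))
                    (Real.rpow_nonneg (by norm_num) _)
              _ = Real.exp (Real.log 2 * (κ/3) + (((Iv T v).card : ℕ):ℝ) * (-(p1/2))) := by
                  rw [h2c, ← Real.exp_add]
              _ = Real.exp (Real.log 2 * (κ/3) - (((Iv T v).card : ℕ):ℝ) * p1 / 2) := by
                  congr 1; ring
          have hfinal : Real.exp (Real.log 2 * (κ/3) - (((Iv T v).card : ℕ):ℝ) * p1 / 2)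
              ≤ Real.exp (120 * Real.log n - Real.exp ((2:ℝ)/3 * Real.log n) / 4)
                * Real.exp (-κ) := by
            rw [← Real.exp_add]
            refine Real.exp_le_exp.2 ?_
            have hnp1 : (n:ℝ) * p1 = Real.exp ((2:ℝ)/3 * Real.log n) := by
              rw [hp1def]
              conv_lhs => rw [← Real.exp_log (show (0:ℝ) < n by linarith)]
              rw [← Real.exp_add]
              congr 1
              rw [Real.log_exp]
              ring
            have hNp1 : Real.exp ((2:ℝ)/3 * Real.log n) / 2 ≤ (((Iv T v).card : ℕ):ℝ) * p1 := by
              rw [← hnp1]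
              have := mul_le_mul_of_nonneg_right hNge hp1pos.le
              linarith
            have hk54 : Real.log 2 * (κ/3) + κ ≤ 120 * Real.log n := by
              have h1 : Real.log 2 * (κ/3) + κ ≤ (5/4)*κ := by nlinarith [log2_le, hκ1]
              have h2 : (5/4)*κ ≤ (5/4)*(96*Real.log n) := by nlinarith [hkb]
              linarith
            linarith [hNp1, hk54]
          have hfb : Real.exp (120 * Real.log n - Real.exp ((2:ℝ)/3 * Real.log n) / 4)
                * Real.exp (-κ) ≤ fbig n * Real.exp (-κ) := by
            refine mul_le_mul_of_nonneg_right ?_ (Real.exp_pos _).le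
            rw [fbig]
            have : (0:ℝ) ≤ 2 * Real.exp 1 * Real.exp (-((2:ℝ)/9) * Real.log n) := by positivity
            linarith
          calc flipProb p T (fun P => (outDeg P v : ℝ) < κ/3) ≤ T1 * T2 := hmain
            _ ≤ 1 * T2 := mul_le_mul_of_nonneg_right hT1le1 hT2nn
            _ = T2 := one_mul _
            _ ≤ fbig n * Real.exp (-κ) := le_trans hstep (le_trans hfinal hfb)
            _ ≤ ffun n * Real.exp (-κ) + gfun n / n := by rw [hffun]; linarith
end
end PTPD
namespace PTPD

lemma tendsto_log_nat : Tendsto (fun n : ℕ => Real.log n) atTop atTop :=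
  Real.tendsto_log_atTop.comp tendsto_natCast_atTop_atTop

lemma tendsto_gfun : Tendsto gfun atTop (nhds 0) := by
  unfold gfun
  exact tendsto_one_div_atTop_nhds_zero_nat

lemma tendsto_fbig : Tendsto fbig atTop (nhds 0) := by
  unfold fbig
  have hL := tendsto_log_nat
  have h1 : Tendsto (fun n : ℕ => 2 * Real.exp 1 * Real.exp (-((2:ℝ)/9) * Real.log n))
      atTop (nhds 0) := by
    have hinner : Tendsto (fun n : ℕ => -((2:ℝ)/9) * Real.log n) atTop atBot := by
      have h : Tendsto (fun n : ℕ => ((2:ℝ)/9) * Real.log n) atTop atTop :=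
        hL.const_mul_atTop (by norm_num)
      have := tendsto_neg_atBot_iff.2 h
      refine this.congr fun n => by ring
    have := Real.tendsto_exp_atBot.comp hinner
    have h0 := this.const_mul (2 * Real.exp 1)
    simpa using h0
  have h2 : Tendsto (fun n : ℕ =>
      Real.exp (120 * Real.log n - Real.exp ((2:ℝ)/3 * Real.log n) / 4)) atTop (nhds 0) := by
    have hinner : Tendsto (fun n : ℕ =>
        120 * Real.log n - Real.exp ((2:ℝ)/3 * Real.log n) / 4) atTop atBot := by
      have hev : ∀ᶠ n : ℕ in atTop,
          120 * Real.log n - Real.exp ((2:ℝ)/3 * Real.log n) / 4 ≤ -(Real.log n) := by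
        filter_upwards [hL.eventually_ge_atTop 4356] with n hn
        have hLn : (0:ℝ) ≤ Real.log n := by linarith
        have hexp : (1 + Real.log n / 3)^2 ≤ Real.exp ((2:ℝ)/3 * Real.log n) := by
          have h1 : Real.exp ((2:ℝ)/3 * Real.log n) = Real.exp (Real.log n / 3) ^ 2 := by
            rw [← exp_two_pow]; congr 1; ring
          have h2 : 1 + Real.log n / 3 ≤ Real.exp (Real.log n / 3) := by
            have := Real.add_one_le_exp (Real.log n / 3); linarith
          rw [h1]
          exact pow_le_pow_left₀ (by linarith) h2 2
        nlinarith [hexp, hn, hLn]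
      have hneg : Tendsto (fun n : ℕ => -(Real.log n)) atTop atBot :=
        tendsto_neg_atBot_iff.2 hL
      exact tendsto_atBot_mono' atTop hev hneg
    exact Real.tendsto_exp_atBot.comp hinner
  have := h1.add h2
  simpa using this

lemma tendsto_ffun : Tendsto ffun atTop (nhds 0) := by
  refine tendsto_fbig.congr' ?_
  filter_upwards [eventually_ge_atTop (10^7)] with n hn
  rw [ffun, if_neg (not_lt.2 hn)]

section
variable {n : ℕ} {T : Fin n → Fin n → Bool} {v : Fin n} {p : ℝ}

lemma transpose_tournament (hT : IsTournament T) :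
    IsTournament (fun u w => T w u) := by
  refine ⟨fun u => hT.1 u, fun u w h => ?_⟩
  exact hT.2 w u (Ne.symm h)

lemma flipProb_indeg (c : ℝ) :
    flipProb p T (fun P => (inDeg P v : ℝ) < c) =
      flipProb p (fun u w => T w u) (fun P => (outDeg P v : ℝ) < c) := by
  classical
  rw [flipProb, flipProb]
  refine Finset.sum_congr rfl fun S hS => ?_
  have hdeg : inDeg (flipEdges T S) v = outDeg (flipEdges (fun u w => T w u) S) v := by
    unfold inDeg outDeg
    congr 1
    refine Finset.filter_congr fun w _ => ?_
    have : flipEdges (fun u w => T w u) S v w = flipEdges T S w v := by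
      unfold flipEdges
      by_cases hc : (v, w) ∈ S ∨ (w, v) ∈ S
      · rw [if_pos hc, if_pos (Or.symm hc)]
      · rw [if_neg hc, if_neg (fun h => hc (Or.symm h))]
    rw [this]
  rw [hdeg]

end
end PTPD

/-- There are functions `f(n) → 0` and `g(n) → 0` such that for every `n`, every tournament
`T` on `n` vertices, every `0 ≤ p ≤ 1/2` and every vertex `v` of out-degree (resp. in-degree)
`k` in `T`, the probability that `v` has out-degree (resp. in-degree) less than `k/3` in the
random tournament obtained from `T` by reversing each edge independently with probability `p`
is at most `f(n)·e^{-k} + g(n)/n`. -/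
theorem perturbed_tournament_preserves_degree :
    ∃ f g : ℕ → ℝ,
      Tendsto f atTop (nhds 0) ∧ Tendsto g atTop (nhds 0) ∧
      ∀ (n : ℕ) (T : Fin n → Fin n → Bool), IsTournament T →
        ∀ p : ℝ, 0 ≤ p → p ≤ 1 / 2 → ∀ (v : Fin n) (k : ℕ),
          (outDeg T v = k →
            flipProb p T (fun P => (outDeg P v : ℝ) < (k : ℝ) / 3) ≤
              f n * Real.exp (-(k : ℝ)) + g n / n) ∧
          (inDeg T v = k →
            flipProb p T (fun P => (inDeg P v : ℝ) < (k : ℝ) / 3) ≤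
              f n * Real.exp (-(k : ℝ)) + g n / n) := by
  refine ⟨PTPD.ffun, PTPD.gfun, PTPD.tendsto_ffun, PTPD.tendsto_gfun, ?_⟩
  intro n T hT p hp0 hp2 v k
  constructor
  · intro hk
    exact PTPD.master hT hp0 hp2 v k hk
  · intro hk
    rw [PTPD.flipProb_indeg]
    exact PTPD.master (PTPD.transpose_tournament hT) hp0 hp2 v k hk
end

section
/- Let k be a positive integer and let D be a digraph in which every vertex has in-degree at least k and out-degree at least k, and suppose that for every pair of disjoint sets A, B ⊆ V(D) with |A| = |B| = k there is an arc from A to B (i.e., an arc (a, b) with a ∈ A and b ∈ B). Then for every ordered pair of distinct vertices v, w of D there is a directed path from v to w of length at most 3; in particular, D is strongly connected. -/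
open Finset

/-- A directed path from `v` to `w` in the digraph with arc set `D`, recorded by its list `l`
of internal vertices (so the path has length `l.length + 1`). -/
def IsDipath {n : ℕ} (D : Finset (Fin n × Fin n)) (v w : Fin n) (l : List (Fin n)) : Prop :=
  l.Nodup ∧ v ∉ l ∧ w ∉ l ∧ List.Chain (fun a b => (a, b) ∈ D) v (l ++ [w])

/-- For a digraph given by its arc set `D` on `Fin n`: if every vertex has in- and out-degree
at least `k`, and for every pair of disjoint vertex sets `A`, `B` with `|A| = |B| = k` there is
an arc from `A` to `B`, then for every ordered pair of distinct vertices `v`, `w` there is a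
directed path from `v` to `w` of length at most `3`; in particular `D` is strongly
connected. -/
theorem pseudorandom_digraph_strongly_connected (k n : ℕ) (hk : 0 < k)
    (D : Finset (Fin n × Fin n)) (hirr : ∀ a ∈ D, a.1 ≠ a.2)
    (hout : ∀ v : Fin n, k ≤ (D.filter fun a => a.1 = v).card)
    (hin : ∀ v : Fin n, k ≤ (D.filter fun a => a.2 = v).card)
    (hexp : ∀ A B : Finset (Fin n), Disjoint A B → A.card = k → B.card = k →
      ∃ a ∈ A, ∃ b ∈ B, (a, b) ∈ D) :
    (∀ v w : Fin n, v ≠ w → ∃ l : List (Fin n), IsDipath D v w l ∧ l.length ≤ 2) ∧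
    (∀ v w : Fin n, v ≠ w → ∃ l : List (Fin n), IsDipath D v w l) := by
  have main : ∀ v w : Fin n, v ≠ w → ∃ l : List (Fin n), IsDipath D v w l ∧ l.length ≤ 2 := by
    intro v w hvw
    by_cases hdir : (v, w) ∈ D
    · exact ⟨[], ⟨List.nodup_nil, by simp, by simp, by simp [List.Chain, hdir]⟩, by simp⟩
    set Nout := (D.filter fun a => a.1 = v).image Prod.snd with hNout
    set Nin := (D.filter fun a => a.2 = w).image Prod.fst with hNin
    have hmemout : ∀ u, u ∈ Nout ↔ (v, u) ∈ D := by
      intro u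
      simp only [hNout, mem_image, mem_filter]
      constructor
      · rintro ⟨⟨a, b⟩, ⟨hab, rfl⟩, rfl⟩; exact hab
      · intro h; exact ⟨(v, u), ⟨h, rfl⟩, rfl⟩
    have hmemin : ∀ u, u ∈ Nin ↔ (u, w) ∈ D := by
      intro u
      simp only [hNin, mem_image, mem_filter]
      constructor
      · rintro ⟨⟨a, b⟩, ⟨hab, rfl⟩, rfl⟩; exact hab
      · intro h; exact ⟨(u, w), ⟨h, rfl⟩, rfl⟩
    by_cases hint : ∃ u, u ∈ Nout ∧ u ∈ Nin
    · obtain ⟨u, hu1, hu2⟩ := hint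
      have h1 : (v, u) ∈ D := (hmemout u).1 hu1
      have h2 : (u, w) ∈ D := (hmemin u).1 hu2
      have huv : v ≠ u := hirr _ h1
      have huw : u ≠ w := hirr _ h2
      refine ⟨[u], ⟨List.nodup_singleton u, ?_, ?_, ?_⟩, by simp⟩
      · simp [huv]
      · simp [Ne.symm huw]
      · simp [List.chain_cons, List.Chain, h1, h2]
    · have hdisj : Disjoint Nout Nin := by
        rw [Finset.disjoint_left]
        intro u hu1 hu2
        exact hint ⟨u, hu1, hu2⟩
      have hcardout : k ≤ Nout.card := by
        rw [hNout, Finset.card_image_of_injOn]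
        · exact hout v
        · rintro ⟨a1, a2⟩ ha ⟨b1, b2⟩ hb h
          simp only [Finset.coe_filter, Set.mem_setOf_eq] at ha hb
          exact Prod.ext (ha.2.trans hb.2.symm) h
      have hcardin : k ≤ Nin.card := by
        rw [hNin, Finset.card_image_of_injOn]
        · exact hin w
        · rintro ⟨a1, a2⟩ ha ⟨b1, b2⟩ hb h
          simp only [Finset.coe_filter, Set.mem_setOf_eq] at ha hb
          exact Prod.ext h (ha.2.trans hb.2.symm)
      obtain ⟨A, hA, hAcard⟩ := Finset.exists_subset_card_eq hcardout
      obtain ⟨B, hB, hBcard⟩ := Finset.exists_subset_card_eq hcardin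
      obtain ⟨a, ha, b, hb, hab⟩ := hexp A B
        (hdisj.mono hA hB) hAcard hBcard
      have haN : (v, a) ∈ D := (hmemout a).1 (hA ha)
      have hbN : (b, w) ∈ D := (hmemin b).1 (hB hb)
      have hne : a ≠ b := by
        intro h; subst h
        exact Finset.disjoint_left.1 hdisj (hA ha) (hB hb)
      have hav : v ≠ a := hirr _ haN
      have hbv : b ≠ v := by
        intro h
        have hx : (b, w) ∈ D := (hmemin b).1 (hB hb)
        rw [h] at hx
        exact hdir hx
      have haw : a ≠ w := by
        intro h
        have hx : (v, a) ∈ D := (hmemout a).1 (hA ha)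
        rw [h] at hx
        exact hdir hx
      have hbw : b ≠ w := hirr _ hbN
      refine ⟨[a, b], ⟨?_, ?_, ?_, ?_⟩, by simp⟩
      · simp [hne]
      · simp [hav, Ne.symm hbv]
      · simp [Ne.symm haw, Ne.symm hbw]
      · simp [List.chain_cons, List.Chain, haN, hab, hbN]
  refine ⟨main, fun v w h => ?_⟩
  obtain ⟨l, hl, -⟩ := main v w h
  exact ⟨l, hl⟩
end
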